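/- arXiv:2311.10053 — 9 statements merged into one kernel-verified Lean document; each statement's English description precedes it below -/
import Mathlib

section
/- Let E : [t₀, ∞) → ℝ be a continuously differentiable nonnegative function whose derivative is nonpositive (E is non-increasing), and let α ≥ 0. If ∫_{t₀}^{∞} t^α E(t) dt < ∞, then lim_{t→∞} t^{α+1} E(t) = 0. -/
open Set MeasureTheory Filter

theorem stmt_2 (t₀ : ℝ) (ht₀ : 0 < t₀) (E E' : ℝ → ℝ) (α : ℝ) (hα : 0 ≤ α)
    (hderiv : ∀ t ∈ Ici t₀, HasDerivAt E (E' t) t)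
    (hE'cont : ContinuousOn E' (Ici t₀))
    (hnonneg : ∀ t ∈ Ici t₀, 0 ≤ E t)
    (hE'nonpos : ∀ t ∈ Ici t₀, E' t ≤ 0)
    (hint : IntegrableOn (fun t => t ^ α * E t) (Ici t₀)) :
    Tendsto (fun t => t ^ (α + 1) * E t) atTop (nhds 0) := by
  set f : ℝ → ℝ := fun t => t ^ α * E t with hf
  -- continuity of E on Ici t₀
  have hEcont : ContinuousOn E (Ici t₀) := fun x hx =>
    (hderiv x hx).continuousAt.continuousWithinAt
  -- E is antitone on Ici t₀
  have hanti : AntitoneOn E (Ici t₀) := by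
    refine antitoneOn_of_deriv_nonpos (convex_Ici t₀) hEcont ?_ ?_
    · intro x hx
      rw [interior_Ici] at hx
      exact (hderiv x (mem_Ici.mpr (le_of_lt hx))).differentiableAt.differentiableWithinAt
    · intro x hx
      rw [interior_Ici] at hx
      rw [(hderiv x (mem_Ici.mpr (le_of_lt hx))).deriv]
      exact hE'nonpos x (mem_Ici.mpr (le_of_lt hx))
  have hintIoi : IntegrableOn f (Ioi t₀) := hint.mono_set Ioi_subset_Ici_self
  -- the limit of ∫_{t₀}^x f
  have hlim : Tendsto (fun x => ∫ s in t₀..x, f s) atTop (nhds (∫ s in Ioi t₀, f s)) :=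
    intervalIntegral_tendsto_integral_Ioi t₀ hintIoi tendsto_id
  have hhalf : Tendsto (fun t : ℝ => t / 2) atTop atTop :=
    tendsto_id.atTop_div_const (by norm_num)
  have hlim2 : Tendsto (fun t => ∫ s in t₀..(t / 2), f s) atTop (nhds (∫ s in Ioi t₀, f s)) :=
    hlim.comp hhalf
  have hg : Tendsto (fun t => ∫ s in (t / 2)..t, f s) atTop (nhds 0) := by
    have h := hlim.sub hlim2
    rw [sub_self] at h
    apply h.congr'
    filter_upwards [eventually_ge_atTop (2 * t₀)] with t ht
    have h1 : t₀ ≤ t / 2 := by linarith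
    have h2 : t₀ ≤ t := by linarith
    have hi1 : IntervalIntegrable f volume t₀ (t / 2) := by
      apply IntegrableOn.intervalIntegrable
      apply hint.mono_set
      rw [uIcc_of_le h1]
      exact fun x hx => hx.1
    have hi2 : IntervalIntegrable f volume (t / 2) t := by
      apply IntegrableOn.intervalIntegrable
      apply hint.mono_set
      rw [uIcc_of_le (by linarith : t / 2 ≤ t)]
      exact fun x hx => le_trans h1 hx.1
    rw [← intervalIntegral.integral_add_adjacent_intervals hi1 hi2]
    ring
  -- squeeze
  have hub : ∀ᶠ t in atTop, t ^ (α + 1) * E t ≤ 2 ^ (α + 1) * ∫ s in (t / 2)..t, f s := by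
    filter_upwards [eventually_ge_atTop (2 * t₀)] with t ht
    have h1 : t₀ ≤ t / 2 := by linarith
    have htpos : 0 < t := by linarith
    have h2pos : (0:ℝ) < t / 2 := by linarith
    have hi2 : IntervalIntegrable f volume (t / 2) t := by
      apply IntegrableOn.intervalIntegrable
      apply hint.mono_set
      rw [uIcc_of_le (by linarith : t / 2 ≤ t)]
      exact fun x hx => le_trans h1 hx.1
    have hconst : IntervalIntegrable (fun _ : ℝ => (t / 2) ^ α * E t) volume (t / 2) t :=
      intervalIntegrable_const
    have hmono : (∫ _ in (t / 2)..t, (t / 2) ^ α * E t) ≤ ∫ s in (t / 2)..t, f s := by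
      apply intervalIntegral.integral_mono_on (by linarith : t / 2 ≤ t) hconst hi2
      intro x hx
      have hx1 : t₀ ≤ x := le_trans h1 hx.1
      have hEx : E t ≤ E x := hanti (mem_Ici.mpr hx1) (mem_Ici.mpr (by linarith)) hx.2
      have hpow : (t / 2) ^ α ≤ x ^ α :=
        Real.rpow_le_rpow (le_of_lt h2pos) hx.1 hα
      have hEt : 0 ≤ E t := hnonneg t (mem_Ici.mpr (by linarith))
      calc (t / 2) ^ α * E t ≤ x ^ α * E t := by
            apply mul_le_mul_of_nonneg_right hpow hEt
        _ ≤ x ^ α * E x := by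
            apply mul_le_mul_of_nonneg_left hEx
            exact Real.rpow_nonneg (by linarith) α
    rw [intervalIntegral.integral_const, smul_eq_mul] at hmono
    have hEt : 0 ≤ E t := hnonneg t (mem_Ici.mpr (by linarith))
    have key : t ^ (α + 1) * E t = 2 ^ (α + 1) * ((t - t / 2) * ((t / 2) ^ α * E t)) := by
      have h1 : t - t / 2 = t / 2 := by ring
      rw [h1]
      have h2 : (t / 2) * ((t / 2) ^ α * E t) = (t / 2) ^ (α + 1) * E t := by
        rw [Real.rpow_add_one (ne_of_gt h2pos)]
        ring
      rw [h2, ← mul_assoc, ← Real.mul_rpow (by norm_num) (le_of_lt h2pos)]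
      rw [show (2:ℝ) * (t / 2) = t by ring]
    rw [key]
    apply mul_le_mul_of_nonneg_left hmono
    positivity
  have hlb : ∀ᶠ t in atTop, 0 ≤ t ^ (α + 1) * E t := by
    filter_upwards [eventually_ge_atTop t₀, eventually_ge_atTop 0] with t ht ht0
    exact mul_nonneg (Real.rpow_nonneg ht0 _) (hnonneg t ht)
  have hg' : Tendsto (fun t => 2 ^ (α + 1) * ∫ s in (t / 2)..t, f s) atTop (nhds 0) := by
    have := hg.const_mul ((2:ℝ) ^ (α + 1))
    simpa using this
  exact tendsto_of_tendsto_of_tendsto_of_le_of_le' tendsto_const_nhds hg' hlb hub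
end

section
/- In the setting of the Lyapunov-damped system (LD) with f convex and attaining its minimum, if the solution x is bounded on [t₀, ∞), then ∫_{t₀}^{∞} E(t) dt < ∞, and consequently E(t) → 0 as t → ∞; in particular f(x(t)) → f* and ‖ẋ(t)‖ → 0. -/
open Set Filter MeasureTheory

section aux
variable {H : Type*} [NormedAddCommGroup H] [InnerProductSpace ℝ H] [CompleteSpace H]

lemma grad_comp_deriv (f : H → ℝ) (g : H) (c : ℝ → H) (c' : H) (t : ℝ)
    (hg : HasGradientAt f g (c t)) (hc : HasDerivAt c c' t) :
    HasDerivAt (fun s => f (c s)) (inner ℝ g c' : ℝ) t := by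
  have := (hasGradientAt_iff_hasFDerivAt.mp hg).comp_hasDerivAt t hc
  simp [InnerProductSpace.toDual_apply_apply] at this
  exact this

lemma grad_convex_ineq (f : H → ℝ) (hconv : ConvexOn ℝ univ f) (a b g : H)
    (hg : HasGradientAt f g a) : f a + (inner ℝ g (b - a) : ℝ) ≤ f b := by
  set φ : ℝ → ℝ := fun s => f (a + s • (b - a)) with hφ
  have hc : ∀ s : ℝ, HasDerivAt (fun s : ℝ => a + s • (b - a)) (b - a) s := by
    intro s
    simpa using ((hasDerivAt_id s).smul_const (b - a)).const_add a
  have hd : HasDerivAt φ (inner ℝ g (b - a) : ℝ) 0 := by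
    have := grad_comp_deriv f g (fun s : ℝ => a + s • (b - a)) (b - a) 0 (by simpa using hg) (hc 0)
    simpa [hφ] using this
  have key : ∀ s ∈ Ioo (0:ℝ) 1, slope φ 0 s ≤ f b - f a := by
    intro s hs
    have h1 : φ s ≤ (1 - s) * f a + s * f b := by
      have := hconv.2 (mem_univ a) (mem_univ b) (by linarith [hs.2] : (0:ℝ) ≤ 1 - s)
        (le_of_lt hs.1) (by ring)
      calc φ s = f ((1 - s) • a + s • b) := by
            simp only [hφ]; congr 1; module
        _ ≤ (1 - s) * f a + s * f b := this
    have hφ0 : φ 0 = f a := by simp [hφ]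
    rw [slope_def_field, hφ0, sub_zero, div_le_iff₀ hs.1]
    nlinarith [hs.1]
  have hsl : Tendsto (slope φ 0) (nhdsWithin 0 (Ioi 0)) (nhds (inner ℝ g (b - a) : ℝ)) := by
    have := hasDerivAt_iff_tendsto_slope.mp hd
    exact this.mono_left (nhdsWithin_mono _ (by intro y hy; exact ne_of_gt hy))
  have : (inner ℝ g (b - a) : ℝ) ≤ f b - f a := by
    refine le_of_tendsto hsl ?_
    filter_upwards [Ioo_mem_nhdsGT_of_mem (by norm_num : (0:ℝ) ∈ Ico (0:ℝ) 1)] with s hs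
    exact key s hs
  linarith

end aux

lemma antitoneOn_Ici_of_hasDerivAt {g g' : ℝ → ℝ} {a : ℝ}
    (hg : ∀ t ∈ Ici a, HasDerivAt g (g' t) t) (h0 : ∀ t ∈ Ici a, g' t ≤ 0) :
    AntitoneOn g (Ici a) := by
  apply antitoneOn_of_deriv_nonpos (convex_Ici a)
  · exact fun t ht => (hg t ht).continuousAt.continuousWithinAt
  · rw [interior_Ici]
    exact fun t ht => ((hg t (Ioi_subset_Ici_self ht)).differentiableAt).differentiableWithinAt
  · rw [interior_Ici]
    intro t ht
    rw [(hg t (Ioi_subset_Ici_self ht)).deriv]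
    exact h0 t (Ioi_subset_Ici_self ht)

theorem stmt_6 {H : Type*} [NormedAddCommGroup H] [InnerProductSpace ℝ H] [CompleteSpace H]
    (f : H → ℝ) (f' : H → H)
    (hf : ∀ y, HasGradientAt f (f' y) y)
    (hconv : ConvexOn ℝ univ f)
    (z : H) (hz : ∀ y, f z ≤ f y)
    (fstar : ℝ) (hfstar : fstar = f z)
    (t₀ : ℝ) (x x' x'' : ℝ → H)
    (hx : ∀ t, HasDerivAt x (x' t) t)
    (hx' : ∀ t, HasDerivAt x' (x'' t) t)
    (E : ℝ → ℝ) (hE : ∀ t, E t = f (x t) - fstar + ‖x' t‖ ^ 2 / 2)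
    (hODE : ∀ t ≥ t₀, x'' t + Real.sqrt (E t) • x' t + f' (x t) = 0)
    (hbdd : ∃ M : ℝ, ∀ t ≥ t₀, ‖x t‖ ≤ M) :
    IntegrableOn E (Ici t₀) ∧
      Tendsto E atTop (nhds 0) ∧
      Tendsto (fun t => f (x t)) atTop (nhds fstar) ∧
      Tendsto (fun t => ‖x' t‖) atTop (nhds 0) := by
  obtain ⟨M, hM⟩ := hbdd
  -- basic facts
  have hfx : ∀ t, fstar ≤ f (x t) := fun t => hfstar ▸ hz (x t)
  have hEnn : ∀ t, 0 ≤ E t := by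
    intro t
    rw [hE t]
    have h := hfx t
    have := sq_nonneg ‖x' t‖
    linarith
  have hEfun : E = fun t => f (x t) - fstar + ‖x' t‖ ^ 2 / 2 := funext hE
  -- derivative of E
  have hEder : ∀ t, HasDerivAt E ((inner ℝ (f' (x t)) (x' t) : ℝ) + inner ℝ (x'' t) (x' t)) t := by
    intro t
    rw [hEfun]
    have h1 : HasDerivAt (fun s => f (x s)) (inner ℝ (f' (x t)) (x' t) : ℝ) t :=
      grad_comp_deriv f (f' (x t)) x (x' t) t (hf (x t)) (hx t)
    have h2 : HasDerivAt (fun s => ‖x' s‖ ^ 2 / 2) (inner ℝ (x'' t) (x' t) : ℝ) t := by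
      have h3 : HasDerivAt (fun s => (inner ℝ (x' s) (x' s) : ℝ))
          ((inner ℝ (x' t) (x'' t) : ℝ) + inner ℝ (x'' t) (x' t)) t :=
        (hx' t).inner ℝ (hx' t)
      have h4 := h3.div_const 2
      have : ((inner ℝ (x' t) (x'' t) : ℝ) + inner ℝ (x'' t) (x' t)) / 2
          = (inner ℝ (x'' t) (x' t) : ℝ) := by
        rw [real_inner_comm (x' t) (x'' t)]; ring
      rw [this] at h4
      refine h4.congr_of_eventuallyEq (Filter.Eventually.of_forall fun s => ?_); beta_reduce
      rw [real_inner_self_eq_norm_sq]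
    exact (h1.sub_const fstar).add h2
  have hEder' : ∀ t ∈ Ici t₀, HasDerivAt E (-(Real.sqrt (E t) * ‖x' t‖ ^ 2)) t := by
    intro t ht
    have key : (inner ℝ (f' (x t)) (x' t) : ℝ) + inner ℝ (x'' t) (x' t)
        = -(Real.sqrt (E t) * ‖x' t‖ ^ 2) := by
      have h0 := hODE t ht
      have : x'' t = -(Real.sqrt (E t) • x' t) - f' (x t) := by
        linear_combination (norm := module) h0
      rw [this]
      simp [inner_sub_left, inner_neg_left, real_inner_smul_left, real_inner_self_eq_norm_sq]
    rw [← key]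
    exact hEder t
  have hEanti : AntitoneOn E (Ici t₀) := by
    apply antitoneOn_Ici_of_hasDerivAt hEder'
    intro t ht
    have := Real.sqrt_nonneg (E t)
    have := sq_nonneg ‖x' t‖
    nlinarith
  have hEcont : Continuous E := by
    rw [continuous_iff_continuousAt]; exact fun t => (hEder t).continuousAt
  have hx'cont : Continuous x' := by
    rw [continuous_iff_continuousAt]; exact fun t => (hx' t).continuousAt
  have hn2cont : Continuous fun t => ‖x' t‖ ^ 2 := (hx'cont.norm).pow 2
  -- bound ‖x' t‖ ≤ sqrt (2 E t)
  have hx'le : ∀ t, ‖x' t‖ ≤ Real.sqrt (2 * E t) := by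
    intro t
    have h1 : ‖x' t‖ ^ 2 ≤ 2 * E t := by
      rw [hE t]; have := hfx t; nlinarith
    calc ‖x' t‖ = Real.sqrt (‖x' t‖ ^ 2) := by
          rw [Real.sqrt_sq (norm_nonneg _)]
      _ ≤ Real.sqrt (2 * E t) := Real.sqrt_le_sqrt h1
  -- main integral bound: exists K with interval integrals bounded, E → 0
  have main : IntegrableOn E (Ici t₀) ∧ Tendsto E atTop (nhds 0) := by
    by_cases hpos : ∀ t ∈ Ici t₀, 0 < E t
    · -- E stays positive
      set G : ℝ → ℝ := fun t => Real.sqrt (E t) with hGdef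
      have hGnn : ∀ t, 0 ≤ G t := fun t => Real.sqrt_nonneg _
      have hGder : ∀ t ∈ Ici t₀, HasDerivAt G (-(‖x' t‖ ^ 2 / 2)) t := by
        intro t ht
        have h := (Real.hasDerivAt_sqrt (ne_of_gt (hpos t ht))).comp t (hEder' t ht)
        have hs : (0:ℝ) < Real.sqrt (E t) := Real.sqrt_pos.mpr (hpos t ht)
        refine h.congr_deriv ?_
        field_simp
      set A : ℝ → ℝ := fun t => ‖x t - z‖ ^ 2 / 2 with hAdef
      have hAnn : ∀ t, 0 ≤ A t := fun t => by positivity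
      set p : ℝ → ℝ := fun t => inner ℝ (x' t) (x t - z) with hpdef
      have hAder : ∀ t, HasDerivAt A (p t) t := by
        intro t
        have hc : HasDerivAt (fun s => x s - z) (x' t) t := (hx t).sub_const z
        have h3 : HasDerivAt (fun s => (inner ℝ (x s - z) (x s - z) : ℝ))
            ((inner ℝ (x t - z) (x' t) : ℝ) + inner ℝ (x' t) (x t - z)) t := hc.inner ℝ hc
        have h4 := h3.div_const 2
        have he : ((inner ℝ (x t - z) (x' t) : ℝ) + inner ℝ (x' t) (x t - z)) / 2 = p t := by
          have hcomm : (inner ℝ (x t - z) (x' t) : ℝ) = inner ℝ (x' t) (x t - z) :=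
            real_inner_comm _ _
          simp only [hpdef, hcomm]
          ring
        rw [he] at h4
        refine h4.congr_of_eventuallyEq (Filter.Eventually.of_forall fun s => ?_); beta_reduce
        rw [real_inner_self_eq_norm_sq]
      have hpder : ∀ t, HasDerivAt p
          ((inner ℝ (x'' t) (x t - z) : ℝ) + ‖x' t‖ ^ 2) t := by
        intro t
        have h3 := (hx' t).inner ℝ ((hx t).sub_const z)
        have he : (inner ℝ (x' t) (x' t) : ℝ) + inner ℝ (x'' t) (x t - z)
            = (inner ℝ (x'' t) (x t - z) : ℝ) + ‖x' t‖ ^ 2 := by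
          rw [real_inner_self_eq_norm_sq]; ring
        rw [he] at h3
        exact h3
      set w : ℝ → ℝ := fun t => p t + G t * A t with hwdef
      have hwder : ∀ t ∈ Ici t₀, HasDerivAt w
          (((inner ℝ (x'' t) (x t - z) : ℝ) + ‖x' t‖ ^ 2)
            + (-(‖x' t‖ ^ 2 / 2) * A t + G t * p t)) t := by
        intro t ht
        exact (hpder t).add ((hGder t ht).mul (hAder t))
      -- continuity facts
      have hpcont : Continuous p := by
        rw [continuous_iff_continuousAt]; exact fun t => (hpder t).continuousAt
      have hAcont : Continuous A := by
        rw [continuous_iff_continuousAt]; exact fun t => (hAder t).continuousAt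
      have hGcont : Continuous G := Real.continuous_sqrt.comp hEcont
      have hwcont : Continuous w := hpcont.add (hGcont.mul hAcont)
      have hg2cont : Continuous (fun s => E s - 3/2 * ‖x' s‖ ^ 2) :=
        hEcont.sub (continuous_const.mul hn2cont)
      -- the decreasing auxiliary function q
      set q : ℝ → ℝ := fun T => w T + ∫ s in t₀..T, (E s - 3/2 * ‖x' s‖ ^ 2) with hqdef
      have hqder : ∀ T ∈ Ici t₀, HasDerivAt q
          ((((inner ℝ (x'' T) (x T - z) : ℝ) + ‖x' T‖ ^ 2)
            + (-(‖x' T‖ ^ 2 / 2) * A T + G T * p T))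
            + (E T - 3/2 * ‖x' T‖ ^ 2)) T := by
        intro T hT
        refine (hwder T hT).add ?_
        exact intervalIntegral.integral_hasDerivAt_right
          (hg2cont.intervalIntegrable t₀ T)
          (hg2cont.stronglyMeasurable.stronglyMeasurableAtFilter)
          hg2cont.continuousAt
      have hqanti : AntitoneOn q (Ici t₀) := by
        apply antitoneOn_Ici_of_hasDerivAt hqder
        intro T hT
        have h0 := hODE T hT
        have hxx : x'' T = -(Real.sqrt (E T) • x' T) - f' (x T) := by
          linear_combination (norm := module) h0
        have hinner : (inner ℝ (x'' T) (x T - z) : ℝ)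
            = -(G T * p T) - inner ℝ (f' (x T)) (x T - z) := by
          rw [hxx]
          simp [inner_sub_left, inner_neg_left, real_inner_smul_left, hGdef, hpdef]
        have hcvx : f (x T) + (inner ℝ (f' (x T)) (z - x T) : ℝ) ≤ f z :=
          grad_convex_ineq f hconv (x T) z (f' (x T)) (hf (x T))
        have hinner2 : (inner ℝ (f' (x T)) (z - x T) : ℝ)
            = -inner ℝ (f' (x T)) (x T - z) := by
          rw [← inner_neg_right]; congr 1; abel
        have hfineq : E T - ‖x' T‖ ^ 2 / 2 ≤ (inner ℝ (f' (x T)) (x T - z) : ℝ) := by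
          rw [hinner2] at hcvx
          rw [hE T, hfstar]
          linarith
        have hA := hAnn T
        have hn := sq_nonneg ‖x' T‖
        rw [hinner]
        nlinarith
      -- the decreasing auxiliary function r
      set r : ℝ → ℝ := fun T => G T + ∫ s in t₀..T, ‖x' s‖ ^ 2 / 2 with hrdef
      have hg3cont : Continuous (fun s => ‖x' s‖ ^ 2 / 2) := hn2cont.div_const 2
      have hrder : ∀ T ∈ Ici t₀, HasDerivAt r (-(‖x' T‖ ^ 2 / 2) + ‖x' T‖ ^ 2 / 2) T := by
        intro T hT
        refine (hGder T hT).add ?_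
        exact intervalIntegral.integral_hasDerivAt_right
          (hg3cont.intervalIntegrable t₀ T)
          (hg3cont.stronglyMeasurable.stronglyMeasurableAtFilter)
          hg3cont.continuousAt
      have hranti : AntitoneOn r (Ici t₀) := by
        apply antitoneOn_Ici_of_hasDerivAt hrder
        intro T hT; linarith
      -- bounds
      have hwT : ∀ T ∈ Ici t₀, -(w T) ≤ Real.sqrt (2 * E t₀) * (M + ‖z‖) := by
        intro T hT
        have h1 : -(w T) ≤ -(p T) := by
          have := mul_nonneg (hGnn T) (hAnn T)
          simp only [hwdef]
          linarith
        have h2 : -(p T) ≤ ‖x' T‖ * ‖x T - z‖ := by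
          have := abs_real_inner_le_norm (x' T) (x T - z)
          have := neg_abs_le (p T)
          simp only [hpdef] at *
          linarith
        have h3 : ‖x' T‖ ≤ Real.sqrt (2 * E t₀) := by
          refine (hx'le T).trans (Real.sqrt_le_sqrt ?_)
          have := hEanti self_mem_Ici hT hT
          linarith
        have h4 : ‖x T - z‖ ≤ M + ‖z‖ := by
          calc ‖x T - z‖ ≤ ‖x T‖ + ‖z‖ := norm_sub_le _ _
            _ ≤ M + ‖z‖ := by have := hM T hT; linarith
        calc -(w T) ≤ ‖x' T‖ * ‖x T - z‖ := h1.trans h2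
          _ ≤ Real.sqrt (2 * E t₀) * (M + ‖z‖) :=
            mul_le_mul h3 h4 (norm_nonneg _) (Real.sqrt_nonneg _)
      set K : ℝ := w t₀ + Real.sqrt (2 * E t₀) * (M + ‖z‖) + 3 * G t₀ with hKdef
      have hKbound : ∀ T ∈ Ici t₀, (∫ s in t₀..T, E s) ≤ K := by
        intro T hT
        have hq : q T ≤ q t₀ := hqanti self_mem_Ici hT hT
        have hr : r T ≤ r t₀ := hranti self_mem_Ici hT hT
        simp only [hqdef, hrdef, intervalIntegral.integral_same] at hq hr
        have hEi : IntervalIntegrable E MeasureTheory.volume t₀ T :=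
          hEcont.intervalIntegrable t₀ T
        have hni : IntervalIntegrable (fun s => 3/2 * ‖x' s‖ ^ 2) MeasureTheory.volume t₀ T :=
          (continuous_const.mul hn2cont).intervalIntegrable t₀ T
        have hsplit : (∫ s in t₀..T, (E s - 3/2 * ‖x' s‖ ^ 2))
            = (∫ s in t₀..T, E s) - ∫ s in t₀..T, 3/2 * ‖x' s‖ ^ 2 :=
          intervalIntegral.integral_sub hEi hni
        have hhalf : (∫ s in t₀..T, ‖x' s‖ ^ 2 / 2)
            = (∫ s in t₀..T, ‖x' s‖ ^ 2) / 2 := by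
          simp [intervalIntegral.integral_div]
        have hmul : (∫ s in t₀..T, 3/2 * ‖x' s‖ ^ 2)
            = 3/2 * ∫ s in t₀..T, ‖x' s‖ ^ 2 := by
          simp [intervalIntegral.integral_const_mul]
        have hGT := hGnn T
        have hwTb := hwT T hT
        rw [hsplit, hmul] at hq
        rw [hhalf] at hr
        simp only [hKdef]
        set I1 : ℝ := ∫ s in t₀..T, E s with hI1
        set I2 : ℝ := ∫ s in t₀..T, ‖x' s‖ ^ 2 with hI2
        have h9 : I1 ≤ w t₀ - w T + 3/2 * I2 := by linarith
        have h10 : I2 ≤ 2 * G t₀ - 2 * G T := by linarith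
        have h11 : -(w T) ≤ Real.sqrt (2 * E t₀) * (M + ‖z‖) := hwTb
        clear_value I1 I2 K q r w A p G
        linarith only [h9, h10, h11, hGT]
      constructor
      · rw [integrableOn_Ici_iff_integrableOn_Ioi]
        apply MeasureTheory.integrableOn_Ioi_of_intervalIntegral_norm_bounded K t₀
          (fun i : ℝ => (hEcont.intervalIntegrable t₀ i).1) tendsto_id
        filter_upwards [eventually_ge_atTop t₀] with T hT
        have : (∫ s in t₀..T, ‖E s‖) = ∫ s in t₀..T, E s := by
          apply intervalIntegral.integral_congr
          intro s _
          exact Real.norm_of_nonneg (hEnn s)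
        rw [this]
        exact hKbound T hT
      · rw [Metric.tendsto_atTop]
        intro ε hε
        refine ⟨max t₀ (t₀ + K / ε) + 1, fun T hT => ?_⟩
        have hT₀ : t₀ ≤ T := le_trans (le_max_left _ _) (by linarith)
        have hlt : E T < ε := by
          by_contra hc
          push_neg at hc
          have hlow : ∀ s ∈ Icc t₀ T, ε ≤ E s := by
            intro s hs
            exact le_trans hc (hEanti hs.1 hT₀ hs.2)
          have hint : (T - t₀) * ε ≤ ∫ s in t₀..T, E s := by
            have := intervalIntegral.integral_mono_on hT₀
              (intervalIntegrable_const : IntervalIntegrable (fun _ => ε) MeasureTheory.volume t₀ T)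
              (hEcont.intervalIntegrable t₀ T) hlow
            simpa [smul_eq_mul] using this
          have hK := hKbound T hT₀
          have hTle : T ≤ t₀ + K / ε := by
            have h5 : (T - t₀) * ε ≤ K := le_trans hint hK
            have h6 : T - t₀ ≤ K / ε := (le_div_iff₀ hε).mpr h5
            linarith
          have : t₀ + K / ε ≤ max t₀ (t₀ + K / ε) := le_max_right _ _
          linarith
        rw [Real.dist_eq, sub_zero, abs_of_nonneg (hEnn T)]
        exact hlt
    · -- E hits zero
      push_neg at hpos
      obtain ⟨t₁, ht₁, hle⟩ := hpos
      have hzero : ∀ t, t₁ ≤ t → E t = 0 := by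
        intro t ht
        have h1 : E t ≤ E t₁ := hEanti ht₁ (le_trans ht₁ ht) ht
        exact le_antisymm (by linarith) (hEnn t)
      constructor
      · have h1 : IntegrableOn E (Icc t₀ t₁) := hEcont.continuousOn.integrableOn_Icc
        have h2 : IntegrableOn E (Ici t₁) := by
          have heq : EqOn (fun _ : ℝ => (0:ℝ)) E (Ici t₁) := fun t ht => (hzero t ht).symm
          exact (integrableOn_zero).congr_fun heq measurableSet_Ici
        rw [← Icc_union_Ici_eq_Ici ht₁]
        exact h1.union h2
      · apply Tendsto.congr' _
          (tendsto_const_nhds : Tendsto (fun _ : ℝ => (0:ℝ)) atTop (nhds 0))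
        filter_upwards [eventually_ge_atTop t₁] with t ht
        exact (hzero t ht).symm
  obtain ⟨hInt, hTend⟩ := main
  refine ⟨hInt, hTend, ?_, ?_⟩
  · have h1 : Tendsto (fun t => f (x t) - fstar) atTop (nhds 0) := by
      apply squeeze_zero (fun t => by linarith [hfx t]) (fun t => ?_) hTend
      have := sq_nonneg ‖x' t‖; rw [hE t]; nlinarith
    have h2 := h1.add_const fstar
    simpa using h2
  · apply squeeze_zero (fun t => norm_nonneg _) hx'le
    have h2 : Tendsto (fun t => 2 * E t) atTop (nhds (2 * 0)) := hTend.const_mul 2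
    have h3 := (Real.continuous_sqrt.tendsto (2 * 0)).comp h2
    simp only [Function.comp_def] at h3
    simpa using h3
end

section
/- In the setting of the Lyapunov-damped system (LD) with f convex attaining its minimum and bounded solution x, the Lyapunov energy satisfies E(t) = o(1/t), i.e., lim_{t→∞} t·E(t) = 0. In particular f(x(t)) - f* = o(1/t). -/
open Set Filter MeasureTheory
local notation "⟪" a ", " b "⟫" => @inner ℝ _ _ a b

lemma grad_ineq {H : Type*} [NormedAddCommGroup H] [InnerProductSpace ℝ H] [CompleteSpace H]
    (f : H → ℝ) (f' : H → H) (hf : ∀ y, HasGradientAt f (f' y) y)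
    (hconv : ConvexOn ℝ univ f) (a b : H) :
    f a + ⟪f' a, b - a⟫ ≤ f b := by
  have hline : ∀ s : ℝ, HasDerivAt (fun s : ℝ => a + s • (b - a)) (b - a) s := by
    intro s
    simpa using ((hasDerivAt_id s).smul_const (b - a)).const_add a
  have hg : ∀ s : ℝ, HasDerivAt (fun s : ℝ => f (a + s • (b - a)))
      ⟪f' (a + s • (b - a)), b - a⟫ s := by
    intro s
    exact ((hf _).hasFDerivAt.comp_hasDerivAt s (hline s))
  have hgc : ConvexOn ℝ univ (fun s : ℝ => f (a + s • (b - a))) := by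
    have h2 := hconv.comp_affineMap (AffineMap.lineMap a b)
    have key : (fun s : ℝ => f (a + s • (b - a))) = f ∘ (AffineMap.lineMap a b) := by
      funext s
      simp [AffineMap.lineMap_apply_module]
      congr 1
      module
    rw [key]
    exact h2.subset (subset_preimage_univ) convex_univ
  have := hgc.le_slope_of_hasDerivAt (mem_univ (0:ℝ)) (mem_univ (1:ℝ)) one_pos (by simpa using hg 0)
  simp [slope] at this
  linarith

theorem stmt_7 {H : Type*} [NormedAddCommGroup H] [InnerProductSpace ℝ H] [CompleteSpace H]
    (f : H → ℝ) (f' : H → H)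
    (hf : ∀ y, HasGradientAt f (f' y) y)
    (hconv : ConvexOn ℝ univ f)
    (z : H) (hz : ∀ y, f z ≤ f y)
    (fstar : ℝ) (hfstar : fstar = f z)
    (t₀ : ℝ) (x x' x'' : ℝ → H)
    (hx : ∀ t, HasDerivAt x (x' t) t)
    (hx' : ∀ t, HasDerivAt x' (x'' t) t)
    (E : ℝ → ℝ) (hE : ∀ t, E t = f (x t) - fstar + ‖x' t‖ ^ 2 / 2)
    (hODE : ∀ t ≥ t₀, x'' t + Real.sqrt (E t) • x' t + f' (x t) = 0)
    (hbdd : ∃ M : ℝ, ∀ t ≥ t₀, ‖x t‖ ≤ M) :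
    Tendsto (fun t => t * E t) atTop (nhds 0) ∧
      Tendsto (fun t => t * (f (x t) - fstar)) atTop (nhds 0) := by
  obtain ⟨M, hM⟩ := hbdd
  have hEfun : E = fun t => f (x t) - fstar + ‖x' t‖ ^ 2 / 2 := funext hE
  have hgd : ∀ t, HasDerivAt (fun t => f (x t)) ⟪f' (x t), x' t⟫ t := fun t => by
    exact (hf (x t)).hasFDerivAt.comp_hasDerivAt t (hx t)
  have hEd : ∀ t, HasDerivAt E (⟪f' (x t), x' t⟫ + ⟪x' t, x'' t⟫) t := by
    intro t
    rw [hEfun]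
    have hn : HasDerivAt (fun t => ‖x' t‖ ^ 2 / 2) ⟪x' t, x'' t⟫ t := by
      have h1 := ((hx' t).inner ℝ (hx' t)).div_const 2
      have : (fun t => ‖x' t‖ ^ 2 / 2) = fun t => ⟪x' t, x' t⟫ / 2 := by
        funext s; rw [real_inner_self_eq_norm_sq]
      rw [this]
      convert h1 using 1
      · rfl
      · rfl
      rw [real_inner_comm]; ring
    exact (((hgd t).sub_const fstar).add hn)
  have hEd' : ∀ t, t₀ ≤ t → HasDerivAt E (-(Real.sqrt (E t) * ‖x' t‖ ^ 2)) t := by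
    intro t ht
    have hfx : f' (x t) + x'' t = -(Real.sqrt (E t) • x' t) := by
      have := hODE t ht
      linear_combination (norm := module) this
    convert hEd t using 1
    have : ⟪f' (x t), x' t⟫ + ⟪x' t, x'' t⟫ = ⟪x' t, f' (x t) + x'' t⟫ := by
      rw [inner_add_right, real_inner_comm]
    rw [this, hfx, inner_neg_right, real_inner_smul_right, real_inner_self_eq_norm_sq]
  have hfx0 : ∀ t, 0 ≤ f (x t) - fstar := fun t => by
    have := hz (x t); rw [hfstar]; linarith
  have hE0 : ∀ t, 0 ≤ E t := fun t => by
    rw [hE t]; have := hfx0 t; positivity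
  have hEcont : Continuous E := by
    apply continuous_iff_continuousAt.2
    exact fun t => (hEd t).continuousAt
  have hanti : AntitoneOn E (Ici t₀) := by
    apply antitoneOn_of_deriv_nonpos (convex_Ici t₀) hEcont.continuousOn
    · intro t ht
      exact ((hEd t).differentiableAt).differentiableWithinAt
    · intro t ht
      rw [interior_Ici] at ht
      rw [(hEd' t (le_of_lt ht)).deriv]
      have h1 := Real.sqrt_nonneg (E t)
      have h2 : (0:ℝ) ≤ ‖x' t‖ ^ 2 := by positivity
      nlinarith
  set S := Real.sqrt (2 * E t₀) with hS
  have hx'b : ∀ t, t₀ ≤ t → ‖x' t‖ ≤ S := by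
    intro t ht
    have h2 : E t ≤ E t₀ := hanti self_mem_Ici ht ht
    have h1 : ‖x' t‖ ^ 2 ≤ 2 * E t₀ := by nlinarith [hE t, hfx0 t]
    calc ‖x' t‖ = Real.sqrt (‖x' t‖ ^ 2) := by rw [Real.sqrt_sq (norm_nonneg _)]
    _ ≤ S := Real.sqrt_le_sqrt h1
  have hEint : ∀ a b : ℝ, IntervalIntegrable E volume a b := fun a b =>
    hEcont.intervalIntegrable a b
  set F := fun T => ∫ s in t₀..T, E s with hFdef
  have hFadd : ∀ a b : ℝ, F b - F a = ∫ s in a..b, E s := by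
    intro a b
    have := intervalIntegral.integral_add_adjacent_intervals (hEint t₀ a) (hEint a b)
    simp only [hFdef]
    linarith
  have hFmono : Monotone F := by
    intro a b hab
    have h0 : 0 ≤ ∫ s in a..b, E s := intervalIntegral.integral_nonneg hab (fun u _ => hE0 u)
    have := hFadd a b; linarith
  have key : Tendsto (fun t => t * E t) atTop (nhds 0) := by
    by_cases hcase : ∀ t, t₀ ≤ t → 0 < E t
    · -- Case B : E positive everywhere on [t₀,∞)
      set u := fun t => Real.sqrt (E t) with hu
      set φ := fun t => ⟪x t - z, x' t⟫ with hφ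
      set hh := fun t => ‖x t - z‖ ^ 2 / 2 with hhdef
      set Θ := fun t => -(3 * u t) - u t * hh t - φ t with hΘ
      have hud : ∀ t, t₀ ≤ t → HasDerivAt u (-(‖x' t‖ ^ 2 / 2)) t := by
        intro t ht
        have hpos := hcase t ht
        have hs : Real.sqrt (E t) ≠ 0 := by positivity
        have := (hEd' t ht).sqrt (ne_of_gt hpos)
        convert this using 1
        field_simp
      have hφd : ∀ t, HasDerivAt φ (‖x' t‖ ^ 2 + ⟪x t - z, x'' t⟫) t := by
        intro t
        have := ((hx t).sub_const z).inner ℝ (hx' t)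
        convert this using 1
        · rfl
        · rfl
        rw [real_inner_self_eq_norm_sq]; ring
      have hhd : ∀ t, HasDerivAt hh (φ t) t := by
        intro t
        have h1 := (((hx t).sub_const z).inner ℝ ((hx t).sub_const z)).div_const 2
        have heq : hh = fun t => ⟪x t - z, x t - z⟫ / 2 := by
          funext s; simp only [hhdef]; rw [real_inner_self_eq_norm_sq]
        rw [heq]
        convert h1 using 1
        · rfl
        · rfl
        simp only [hφ]
        have hc : (inner ℝ (x' t) (x t - z) : ℝ) = inner ℝ (x t - z) (x' t) :=
          real_inner_comm _ _
        rw [hc]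
        ring
      set D := fun t => (1/2) * ‖x' t‖ ^ 2 + (‖x' t‖ ^ 2 / 2) * hh t + ⟪x t - z, f' (x t)⟫
        with hD
      have hΘd : ∀ t, t₀ ≤ t → HasDerivAt Θ (D t) t := by
        intro t ht
        have h1 := (((hud t ht).const_mul 3).neg.sub
          ((hud t ht).mul (hhd t))).sub (hφd t)
        convert h1 using 1
        · rfl
        · rfl
        · rfl
        have hxx : x'' t = -(u t • x' t) - f' (x t) := by
          have := hODE t ht
          linear_combination (norm := module) this
        have h2 : ⟪x t - z, x'' t⟫ = -(u t * φ t) - ⟪x t - z, f' (x t)⟫ := by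
          rw [hxx, inner_sub_right, inner_neg_right, real_inner_smul_right]
        rw [h2]
        simp only [hD]
        ring
      have hDE : ∀ t, t₀ ≤ t → E t ≤ D t := by
        intro t ht
        have hg := grad_ineq f f' hf hconv (x t) z
        have h2 : f (x t) - fstar ≤ ⟪x t - z, f' (x t)⟫ := by
          rw [real_inner_comm]
          have h3 : ⟪f' (x t), x t - z⟫ = -⟪f' (x t), z - x t⟫ := by
            rw [← inner_neg_right]; congr 1; abel
          rw [h3, hfstar]
          linarith
        have hhn : (0:ℝ) ≤ hh t := by positivity
        have hmn : (0:ℝ) ≤ (‖x' t‖ ^ 2 / 2) * hh t := by positivity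
        rw [hE t]
        simp only [hD]
        linarith
      -- F derivative and G monotone
      have hFd : ∀ T, HasDerivAt F (E T) T := fun T =>
        intervalIntegral.integral_hasDerivAt_right (hEint t₀ T)
          (hEcont.stronglyMeasurableAtFilter _ _) hEcont.continuousAt
      have hΘcont : Continuous Θ := by
        have hxc : Continuous x := continuous_iff_continuousAt.2 fun t => (hx t).continuousAt
        have hx'c : Continuous x' := continuous_iff_continuousAt.2 fun t => (hx' t).continuousAt
        have hucont : Continuous u := Real.continuous_sqrt.comp hEcont
        have hφcont : Continuous φ := (hxc.sub continuous_const).inner hx'c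
        have hhcont : Continuous hh := (((hxc.sub continuous_const).norm.pow 2)).div_const 2
        exact ((continuous_const.mul hucont).neg.sub (hucont.mul hhcont)).sub hφcont
      have hGmono : MonotoneOn (fun T => Θ T - F T) (Ici t₀) := by
        apply monotoneOn_of_deriv_nonneg (convex_Ici t₀)
        · exact (hΘcont.sub (continuous_iff_continuousAt.2 fun T => (hFd T).continuousAt)).continuousOn
        · intro t ht
          rw [interior_Ici] at ht
          exact ((hΘd t ht.le).sub (hFd t)).differentiableAt.differentiableWithinAt
        · intro t ht
          rw [interior_Ici] at ht
          rw [HasDerivAt.deriv (f := fun T => Θ T - F T) ((hΘd t ht.le).sub (hFd t))]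
          have := hDE t ht.le
          linarith
      have hMz : (0:ℝ) ≤ M + ‖z‖ := by
        have := hM t₀ le_rfl
        have := norm_nonneg (x t₀)
        have := norm_nonneg z
        linarith
      have hC : ∀ T, F T ≤ max ((M + ‖z‖) * S - Θ t₀) 0 := by
        intro T
        rcases le_total t₀ T with hT | hT
        · have h1 : Θ t₀ - F t₀ ≤ Θ T - F T := hGmono self_mem_Ici hT hT
          have hF0 : F t₀ = 0 := intervalIntegral.integral_same
          have hΘT : Θ T ≤ (M + ‖z‖) * S := by
            have hu0 : (0:ℝ) ≤ u T := Real.sqrt_nonneg _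
            have hh0 : (0:ℝ) ≤ hh T := by positivity
            have huh : (0:ℝ) ≤ u T * hh T := mul_nonneg hu0 hh0
            have hφb : -φ T ≤ (M + ‖z‖) * S := by
              have h4 : -φ T = ⟪z - x T, x' T⟫ := by
                simp only [hφ]
                rw [← inner_neg_left]; congr 1; abel
              have h5 : ⟪z - x T, x' T⟫ ≤ ‖z - x T‖ * ‖x' T‖ := real_inner_le_norm _ _
              have h6 : ‖z - x T‖ ≤ M + ‖z‖ := by
                have := norm_sub_le z (x T)
                have := hM T hT
                linarith
              have h7 : ‖x' T‖ ≤ S := hx'b T hT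
              have h8 : ‖z - x T‖ * ‖x' T‖ ≤ (M + ‖z‖) * S :=
                mul_le_mul h6 h7 (norm_nonneg _) hMz
              linarith
            simp only [hΘ]
            linarith
          have h9 : F T ≤ (M + ‖z‖) * S - Θ t₀ := by linarith
          exact le_trans h9 (le_max_left _ _)
        · have : F T ≤ F t₀ := hFmono hT
          have hF0 : F t₀ = 0 := intervalIntegral.integral_same
          exact le_trans (by linarith) (le_max_right _ _)
      have hlim : Tendsto F atTop (nhds (⨆ i, F i)) :=
        tendsto_atTop_ciSup hFmono ⟨_, fun y ⟨i, hi⟩ => hi ▸ hC i⟩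
      have h2 : Tendsto (fun t => 2 * (F t - F (t / 2))) atTop (nhds 0) := by
        have ht2 : Tendsto (fun t : ℝ => t / 2) atTop atTop := by
          apply tendsto_atTop_atTop.2
          intro b
          exact ⟨2 * b, fun a ha => by linarith⟩
        have := ((hlim.sub (hlim.comp ht2)).const_mul 2)
        simpa using this
      apply tendsto_of_tendsto_of_tendsto_of_le_of_le' tendsto_const_nhds h2
      · filter_upwards [eventually_ge_atTop (0:ℝ)] with t ht
        exact mul_nonneg ht (hE0 t)
      · filter_upwards [eventually_ge_atTop (max (2 * t₀) 0)] with t ht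
        have ht0 : (0:ℝ) ≤ t := le_trans (le_max_right _ _) ht
        have htt : t₀ ≤ t / 2 := by
          have := le_trans (le_max_left _ _) ht; linarith
        have hth : t / 2 ≤ t := by linarith
        have hint : (t / 2) * E t ≤ ∫ s in (t/2)..t, E s := by
          have hmono := intervalIntegral.integral_mono_on hth
            (intervalIntegrable_const (c := E t)) (hEint (t/2) t)
            (fun s hs => hanti (le_trans htt hs.1) (le_trans htt hth) hs.2)
          rw [intervalIntegral.integral_const] at hmono
          have : (t - t / 2) • E t = (t / 2) * E t := by
            rw [smul_eq_mul]; ring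
          linarith [hmono, this.symm.le]
        have hadd := hFadd (t / 2) t
        nlinarith [hE0 t]
    · push_neg at hcase
      obtain ⟨t₁, ht₁, hE₁⟩ := hcase
      have hzero : ∀ t, t₁ ≤ t → E t = 0 := fun t ht =>
        le_antisymm (le_trans (hanti ht₁ (le_trans ht₁ ht) ht) hE₁) (hE0 t)
      apply Tendsto.congr' _ tendsto_const_nhds
      filter_upwards [eventually_ge_atTop t₁] with t ht
      rw [hzero t ht, mul_zero]
  refine ⟨key, ?_⟩
  apply tendsto_of_tendsto_of_tendsto_of_le_of_le' tendsto_const_nhds key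
  · filter_upwards [eventually_ge_atTop (0:ℝ)] with t ht
    exact mul_nonneg ht (hfx0 t)
  · filter_upwards [eventually_ge_atTop (0:ℝ)] with t ht
    have h1 : f (x t) - fstar ≤ E t := by
      have h0 : (0:ℝ) ≤ ‖x' t‖ ^ 2 / 2 := by positivity
      rw [hE t]; linarith
    exact mul_le_mul_of_nonneg_left h1 ht
end

section
/- In the setting of the Lyapunov-damped system (LD) with f convex attaining its minimum and bounded solution x: for every δ > 0, lim_{t→∞} t^{2-δ} (f(x(t)) - f*) = 0, i.e., f(x(t)) - f* = o(1/t^{2-δ}). -/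
open Set Filter MeasureTheory

set_option maxHeartbeats 1000000
open InnerProductSpace
open scoped RealInnerProductSpace

lemma boot_step (t₀ : ℝ) (E K bd Kd : ℝ → ℝ) (C₂ : ℝ) (hC₂ : 0 ≤ C₂)
    (hE0 : ∀ t, t₀ ≤ t → 0 ≤ E t)
    (hEan : ∀ u t, t₀ ≤ u → u ≤ t → E t ≤ E u)
    (hbD : ∀ t, t₀ ≤ t → HasDerivAt (fun u => Real.sqrt (E u)) (bd t) t)
    (hKD : ∀ t, t₀ ≤ t → HasDerivAt K (Kd t) t)
    (hsum : ∀ t, t₀ ≤ t → Kd t + bd t ≤ -(E t))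
    (hKb : ∀ t, t₀ ≤ t → |K t + Real.sqrt (E t)| ≤ C₂ * Real.sqrt (E t))
    (s C T₁ : ℝ) (hs : 0 ≤ s) (hC : 0 ≤ C) (hT₁ : max t₀ 1 ≤ T₁)
    (hb : ∀ t, T₁ ≤ t → Real.sqrt (E t) ≤ C * t ^ (-s)) :
    ∀ T, 2 * T₁ ≤ T → E T ≤ (6 * (s / 2 + 1) * (C₂ * C) * 2 ^ s) * T ^ (-(1 + s)) := by
  intro T hT
  have h1T₁ : (1 : ℝ) ≤ T₁ := le_trans (le_max_right _ _) hT₁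
  have ht₀T₁ : t₀ ≤ T₁ := le_trans (le_max_left _ _) hT₁
  have hT2 : T₁ ≤ T / 2 := by linarith
  have hTpos : (0 : ℝ) < T := by linarith
  have hT2pos : (0 : ℝ) < T / 2 := by linarith
  set γ : ℝ := s / 2 with hγdef
  have hγ : 0 ≤ γ := by positivity
  have hγs : γ - s = -γ := by rw [hγdef]; ring
  have hγ1 : (0 : ℝ) < γ + 1 := by linarith
  set D : ℝ := C₂ * C with hDdef
  have hD : 0 ≤ D := mul_nonneg hC₂ hC
  set b : ℝ → ℝ := fun u => Real.sqrt (E u) with hbdef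
  set F : ℝ → ℝ := fun t => -(t ^ γ * (K t + b t)) - D * t ^ (γ - s)
      - E T * (t ^ (γ + 1) / (γ + 1)) with hFdef
  set Fd : ℝ → ℝ := fun t => -(γ * t ^ (γ - 1) * (K t + b t) + t ^ γ * (Kd t + bd t))
      - D * ((γ - s) * t ^ (γ - s - 1)) - E T * ((γ + 1) * t ^ (γ + 1 - 1) / (γ + 1)) with hFddef
  have hF : ∀ t ∈ Icc (T / 2) T, HasDerivAt F (Fd t) t := by
    intro t ht
    have htpos : (0 : ℝ) < t := lt_of_lt_of_le hT2pos ht.1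
    have ht0 : t₀ ≤ t := le_trans ht₀T₁ (le_trans hT2 ht.1)
    have hrp : ∀ p : ℝ, HasDerivAt (fun u : ℝ => u ^ p) (p * t ^ (p - 1)) t := fun p =>
      Real.hasDerivAt_rpow_const (Or.inl (ne_of_gt htpos))
    exact (((hrp γ).mul ((hKD t ht0).add (hbD t ht0))).neg.sub
      (((hrp (γ - s))).const_mul D)).sub (((hrp (γ + 1)).div_const (γ + 1)).const_mul (E T))
  have hFd0 : ∀ t ∈ Icc (T / 2) T, 0 ≤ Fd t := by
    intro t ht
    have htpos : (0 : ℝ) < t := lt_of_lt_of_le hT2pos ht.1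
    have hT₁t : T₁ ≤ t := le_trans hT2 ht.1
    have ht0 : t₀ ≤ t := le_trans ht₀T₁ hT₁t
    have hbt : b t ≤ C * t ^ (-s) := hb t hT₁t
    have hbt0 : 0 ≤ b t := Real.sqrt_nonneg _
    have hKbt : K t + b t ≤ C₂ * b t := le_of_abs_le (hKb t ht0)
    have h1 : γ * t ^ (γ - 1) * (K t + b t) ≤ γ * D * t ^ (γ - s - 1) := by
      have e1 : t ^ (γ - 1) * t ^ (-s) = t ^ (γ - s - 1) := by
        rw [← Real.rpow_add htpos]; ring_nf
      calc γ * t ^ (γ - 1) * (K t + b t) ≤ γ * t ^ (γ - 1) * (C₂ * (C * t ^ (-s))) := by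
            apply mul_le_mul_of_nonneg_left _ (by positivity)
            exact le_trans hKbt (mul_le_mul_of_nonneg_left hbt hC₂)
        _ = γ * D * (t ^ (γ - 1) * t ^ (-s)) := by rw [hDdef]; ring
        _ = γ * D * t ^ (γ - s - 1) := by rw [e1]
    have h2 : t ^ γ * (Kd t + bd t) ≤ t ^ γ * (-(E t)) :=
      mul_le_mul_of_nonneg_left (hsum t ht0) (by positivity)
    have h3 : -(D * ((γ - s) * t ^ (γ - s - 1))) = γ * D * t ^ (γ - s - 1) := by
      rw [hγs]; ring
    have h4 : E T * ((γ + 1) * t ^ (γ + 1 - 1) / (γ + 1)) = E T * t ^ γ := by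
      rw [show γ + 1 - 1 = γ by ring]
      field_simp
    have h5 : E T ≤ E t := hEan t T ht0 ht.2
    have h6 : 0 ≤ t ^ γ * (E t - E T) := by
      apply mul_nonneg (by positivity); linarith
    have : Fd t = -(γ * t ^ (γ - 1) * (K t + b t)) - t ^ γ * (Kd t + bd t)
        + γ * D * t ^ (γ - s - 1) - E T * t ^ γ := by
      rw [hFddef]; rw [← h3, ← h4]; ring
    rw [this]
    nlinarith [h1, h2, h6]
  have hmono : MonotoneOn F (Icc (T / 2) T) := by
    apply monotoneOn_of_deriv_nonneg (convex_Icc _ _)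
    · exact fun t ht => (hF t ht).continuousAt.continuousWithinAt
    · exact fun t ht =>
        ((hF t (interior_subset ht)).differentiableAt).differentiableWithinAt
    · intro t ht
      rw [(hF t (interior_subset ht)).deriv]
      exact hFd0 t (interior_subset ht)
  have hFF : F (T / 2) ≤ F T :=
    hmono ⟨le_rfl, by linarith⟩ ⟨by linarith, le_rfl⟩ (by linarith)
  -- now extract the bound
  have hET0 : 0 ≤ E T := hE0 T (by linarith)
  have hbT2 : b (T / 2) ≤ C * (T / 2) ^ (-s) := hb _ hT2
  have hbT : b T ≤ C * T ^ (-s) := hb _ (by linarith)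
  have hγsneg : γ - s ≤ 0 := by rw [hγs]; linarith
  have hTT2 : T ^ (γ - s) ≤ (T / 2) ^ (γ - s) :=
    Real.rpow_le_rpow_of_nonpos hT2pos (by linarith) hγsneg
  have hB1 : (T / 2) ^ γ * (K (T / 2) + b (T / 2)) ≤ D * (T / 2) ^ (γ - s) := by
    have e1 : (T / 2) ^ γ * (T / 2) ^ (-s) = (T / 2) ^ (γ - s) := by
      rw [← Real.rpow_add hT2pos]; ring_nf
    calc (T / 2) ^ γ * (K (T / 2) + b (T / 2))
        ≤ (T / 2) ^ γ * (C₂ * (C * (T / 2) ^ (-s))) := by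
          apply mul_le_mul_of_nonneg_left _ (by positivity)
          exact le_trans (le_of_abs_le (hKb _ (by linarith))) (mul_le_mul_of_nonneg_left hbT2 hC₂)
      _ = D * ((T / 2) ^ γ * (T / 2) ^ (-s)) := by rw [hDdef]; ring
      _ = D * (T / 2) ^ (γ - s) := by rw [e1]
  have hB2 : -(T ^ γ * (K T + b T)) ≤ D * (T / 2) ^ (γ - s) := by
    have e1 : T ^ γ * T ^ (-s) = T ^ (γ - s) := by
      rw [← Real.rpow_add hTpos]; ring_nf
    have habs : -(K T + b T) ≤ C₂ * (C * T ^ (-s)) := by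
      refine le_trans (neg_le_abs _) (le_trans (hKb _ (by linarith)) ?_)
      exact mul_le_mul_of_nonneg_left hbT hC₂
    calc -(T ^ γ * (K T + b T)) = T ^ γ * (-(K T + b T)) := by ring
      _ ≤ T ^ γ * (C₂ * (C * T ^ (-s))) := mul_le_mul_of_nonneg_left habs (by positivity)
      _ = D * (T ^ γ * T ^ (-s)) := by rw [hDdef]; ring
      _ = D * T ^ (γ - s) := by rw [e1]
      _ ≤ D * (T / 2) ^ (γ - s) := mul_le_mul_of_nonneg_left hTT2 hD
  have hB3 : 0 ≤ D * T ^ (γ - s) := by positivity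
  have ineqA : E T * ((T ^ (γ + 1) - (T / 2) ^ (γ + 1)) / (γ + 1)) ≤ 3 * (D * (T / 2) ^ (γ - s)) := by
    have hFF' := hFF
    simp only [hFdef] at hFF'
    have expand : E T * ((T ^ (γ + 1) - (T / 2) ^ (γ + 1)) / (γ + 1))
        = E T * (T ^ (γ + 1) / (γ + 1)) - E T * ((T / 2) ^ (γ + 1) / (γ + 1)) := by ring
    rw [expand]
    linarith [hB1, hB2, hB3, hFF']
  -- lower bound on the left side
  have hhalfpow : (T / 2) ^ (γ + 1) = T ^ (γ + 1) * (1 / 2 : ℝ) ^ (γ + 1) := by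
    rw [show T / 2 = T * (1 / 2) by ring, Real.mul_rpow hTpos.le (by norm_num)]
  have hhalf2 : ((1 : ℝ) / 2) ^ (γ + 1) ≤ 1 / 2 := by
    calc ((1 : ℝ) / 2) ^ (γ + 1) ≤ ((1 : ℝ) / 2) ^ (1 : ℝ) :=
          Real.rpow_le_rpow_of_exponent_ge (by norm_num) (by norm_num) (by linarith)
      _ = 1 / 2 := Real.rpow_one _
  have hTg1pos : (0 : ℝ) < T ^ (γ + 1) := Real.rpow_pos_of_pos hTpos _
  have ineqB : E T * (T ^ (γ + 1) * (1 / 2) / (γ + 1)) ≤ 3 * (D * (T / 2) ^ (γ - s)) := by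
    refine le_trans ?_ ineqA
    apply mul_le_mul_of_nonneg_left _ hET0
    apply (div_le_div_iff_of_pos_right hγ1).mpr
    rw [hhalfpow]
    nlinarith [hhalf2, hTg1pos]
  have ineqC : E T * T ^ (γ + 1) ≤ 2 * (γ + 1) * (3 * (D * (T / 2) ^ (γ - s))) := by
    have h : E T * (T ^ (γ + 1) * (1 / 2) / (γ + 1)) = E T * T ^ (γ + 1) / (2 * (γ + 1)) := by
      field_simp
    rw [h] at ineqB
    exact (div_le_iff₀ (by positivity)).mp ineqB |>.trans_eq (by ring)
  have hhalfgs : (T / 2) ^ (γ - s) ≤ T ^ (γ - s) * 2 ^ s := by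
    have e1 : (T / 2) ^ (γ - s) = T ^ (γ - s) * (1 / 2 : ℝ) ^ (γ - s) := by
      rw [show T / 2 = T * (1 / 2) by ring, Real.mul_rpow hTpos.le (by norm_num)]
    have e2 : ((1 : ℝ) / 2) ^ (γ - s) = 2 ^ γ := by
      rw [hγs, Real.div_rpow zero_le_one (by norm_num), Real.one_rpow,
        Real.rpow_neg (by norm_num : (0:ℝ) ≤ 2)]
      simp
    have e3 : (2 : ℝ) ^ γ ≤ 2 ^ s :=
      Real.rpow_le_rpow_of_exponent_le one_le_two (by linarith [hγ, hγs])
    rw [e1, e2]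
    exact mul_le_mul_of_nonneg_left e3 (Real.rpow_nonneg hTpos.le _)
  have ineqD : E T * T ^ (γ + 1) ≤ 6 * (γ + 1) * D * 2 ^ s * T ^ (γ - s) := by
    calc E T * T ^ (γ + 1) ≤ 2 * (γ + 1) * (3 * (D * (T / 2) ^ (γ - s))) := ineqC
      _ ≤ 2 * (γ + 1) * (3 * (D * (T ^ (γ - s) * 2 ^ s))) := by
          apply mul_le_mul_of_nonneg_left _ (by positivity)
          exact mul_le_mul_of_nonneg_left (mul_le_mul_of_nonneg_left hhalfgs hD) (by norm_num)
      _ = 6 * (γ + 1) * D * 2 ^ s * T ^ (γ - s) := by ring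
  -- divide by T ^ (γ + 1)
  have hTT1 : T ^ (γ + 1) * T ^ (-(γ + 1)) = 1 := by
    rw [← Real.rpow_add hTpos, show γ + 1 + -(γ + 1) = 0 by ring, Real.rpow_zero]
  have hfin : E T ≤ 6 * (γ + 1) * D * 2 ^ s * (T ^ (γ - s) * T ^ (-(γ + 1))) := by
    have step1 := mul_le_mul_of_nonneg_right ineqD (Real.rpow_nonneg hTpos.le (-(γ + 1)))
    calc E T = E T * (T ^ (γ + 1) * T ^ (-(γ + 1))) := by rw [hTT1]; ring
      _ = E T * T ^ (γ + 1) * T ^ (-(γ + 1)) := by ring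
      _ ≤ 6 * (γ + 1) * D * 2 ^ s * T ^ (γ - s) * T ^ (-(γ + 1)) := step1
      _ = 6 * (γ + 1) * D * 2 ^ s * (T ^ (γ - s) * T ^ (-(γ + 1))) := by ring
  have efin : T ^ (γ - s) * T ^ (-(γ + 1)) = T ^ (-(1 + s)) := by
    rw [← Real.rpow_add hTpos]; congr 1; rw [hγdef]; ring
  rw [efin] at hfin
  calc E T ≤ 6 * (γ + 1) * D * 2 ^ s * T ^ (-(1 + s)) := hfin
    _ = 6 * (s / 2 + 1) * (C₂ * C) * 2 ^ s * T ^ (-(1 + s)) := by rw [hγdef, hDdef]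

lemma boot_rate (t₀ : ℝ) (E K bd Kd : ℝ → ℝ) (C₂ : ℝ) (hC₂ : 0 ≤ C₂)
    (hE0 : ∀ t, t₀ ≤ t → 0 ≤ E t)
    (hEan : ∀ u t, t₀ ≤ u → u ≤ t → E t ≤ E u)
    (hbD : ∀ t, t₀ ≤ t → HasDerivAt (fun u => Real.sqrt (E u)) (bd t) t)
    (hKD : ∀ t, t₀ ≤ t → HasDerivAt K (Kd t) t)
    (hsum : ∀ t, t₀ ≤ t → Kd t + bd t ≤ -(E t))
    (hKb : ∀ t, t₀ ≤ t → |K t + Real.sqrt (E t)| ≤ C₂ * Real.sqrt (E t)) :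
    ∀ ε > (0 : ℝ), ∃ C' T₂ : ℝ, 0 ≤ C' ∧ 1 ≤ T₂ ∧ ∀ T, T₂ ≤ T → E T ≤ C' * T ^ (ε - 2) := by
  have main : ∀ n : ℕ, ∃ C T₁ : ℝ, 0 ≤ C ∧ max t₀ 1 ≤ T₁ ∧
      ∀ t, T₁ ≤ t → Real.sqrt (E t) ≤ C * t ^ (-(1 - (1 / 2 : ℝ) ^ n)) := by
    intro n
    induction n with
    | zero =>
      refine ⟨Real.sqrt (E (max t₀ 1)), max t₀ 1, Real.sqrt_nonneg _, le_rfl, ?_⟩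
      intro t ht
      have h1 : Real.sqrt (E t) ≤ Real.sqrt (E (max t₀ 1)) :=
        Real.sqrt_le_sqrt (hEan _ _ (le_max_left _ _) ht)
      rw [show -(1 - (1 / 2 : ℝ) ^ (0 : ℕ)) = 0 by norm_num, Real.rpow_zero, mul_one]
      exact h1
    | succ n ih =>
      obtain ⟨C, T₁, hC, hT₁, hb⟩ := ih
      set s : ℝ := 1 - (1 / 2 : ℝ) ^ n with hsdef
      have hs : 0 ≤ s := by
        have : (1 / 2 : ℝ) ^ n ≤ 1 := pow_le_one₀ (by norm_num) (by norm_num)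
        simp only [hsdef]; linarith
      have h1T₁ : (1 : ℝ) ≤ T₁ := le_trans (le_max_right _ _) hT₁
      have hstep := boot_step t₀ E K bd Kd C₂ hC₂ hE0 hEan hbD hKD hsum hKb s C T₁ hs hC hT₁ hb
      refine ⟨Real.sqrt (6 * (s / 2 + 1) * (C₂ * C) * 2 ^ s), 2 * T₁,
        Real.sqrt_nonneg _, le_trans hT₁ (by linarith), ?_⟩
      intro t ht
      have htpos : (0 : ℝ) < t := by linarith
      have hEt := hstep t ht
      have h2 : Real.sqrt (E t) ≤ Real.sqrt ((6 * (s / 2 + 1) * (C₂ * C) * 2 ^ s) * t ^ (-(1 + s))) :=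
        Real.sqrt_le_sqrt hEt
      have h3 : Real.sqrt ((6 * (s / 2 + 1) * (C₂ * C) * 2 ^ s) * t ^ (-(1 + s)))
          = Real.sqrt (6 * (s / 2 + 1) * (C₂ * C) * 2 ^ s) * t ^ (-(1 - (1 / 2 : ℝ) ^ (n + 1))) := by
        rw [Real.sqrt_mul (by positivity), Real.sqrt_eq_rpow (t ^ (-(1 + s))),
          ← Real.rpow_mul htpos.le]
        congr 1
        rw [hsdef]; rw [pow_succ]; ring
      rw [h3] at h2
      exact h2
  intro ε hε
  obtain ⟨n, hn⟩ := exists_pow_lt_of_lt_one hε (by norm_num : (1 / 2 : ℝ) < 1)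
  obtain ⟨C, T₁, hC, hT₁, hb⟩ := main n
  set s : ℝ := 1 - (1 / 2 : ℝ) ^ n with hsdef
  have hs : 0 ≤ s := by
    have : (1 / 2 : ℝ) ^ n ≤ 1 := pow_le_one₀ (by norm_num) (by norm_num)
    simp only [hsdef]; linarith
  have h1T₁ : (1 : ℝ) ≤ T₁ := le_trans (le_max_right _ _) hT₁
  have hstep := boot_step t₀ E K bd Kd C₂ hC₂ hE0 hEan hbD hKD hsum hKb s C T₁ hs hC hT₁ hb
  refine ⟨6 * (s / 2 + 1) * (C₂ * C) * 2 ^ s, 2 * T₁, by positivity, by linarith, ?_⟩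
  intro T hTT
  have hT1' : (1 : ℝ) ≤ T := by linarith
  have h2 : T ^ (-(1 + s)) ≤ T ^ (ε - 2) := by
    apply Real.rpow_le_rpow_of_exponent_le hT1'
    have : (1 / 2 : ℝ) ^ n < ε := hn
    simp only [hsdef]; linarith
  exact le_trans (hstep T hTT) (mul_le_mul_of_nonneg_left h2 (by positivity))


lemma grad_convex_ineq_s9 {H : Type*} [NormedAddCommGroup H] [InnerProductSpace ℝ H] [CompleteSpace H]
    (f : H → ℝ) (f' : H → H) (hf : ∀ y, HasGradientAt f (f' y) y)
    (hconv : ConvexOn ℝ univ f) (u z : H) :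
    f u - f z ≤ ⟪f' u, u - z⟫ := by
  set c : ℝ → H := fun s => AffineMap.lineMap u z s with hcdef
  have hcd : HasDerivAt c (z - u) 0 := by
    have h1 : HasDerivAt (fun s : ℝ => s • (z - u) + u) ((1 : ℝ) • (z - u)) 0 :=
      ((hasDerivAt_id (0 : ℝ)).smul_const (z - u)).add_const u
    rw [one_smul] at h1
    have hfun : c = fun s : ℝ => s • (z - u) + u := by
      funext s
      simp [hcdef, AffineMap.lineMap_apply]
    rw [hfun]
    exact h1
  have hgd : HasDerivAt (f ∘ c) ⟪f' (c 0), z - u⟫ 0 := by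
    have := ((hf (c 0)).hasFDerivAt).comp_hasDerivAt 0 hcd
    simpa [toDual_apply_apply] using this
  have hgconv : ConvexOn ℝ univ (f ∘ (AffineMap.lineMap u z : ℝ →ᵃ[ℝ] H)) := by
    have := hconv.comp_affineMap (AffineMap.lineMap u z : ℝ →ᵃ[ℝ] H)
    simpa using this
  have hslope := hgconv.le_slope_of_hasDerivAt (mem_univ (0 : ℝ)) (mem_univ (1 : ℝ))
    zero_lt_one (by exact hgd)
  have hs : slope (f ∘ (AffineMap.lineMap u z : ℝ →ᵃ[ℝ] H)) 0 1 = f z - f u := by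
    simp [slope, AffineMap.lineMap_apply_zero, AffineMap.lineMap_apply_one]
  rw [hs] at hslope
  have hc0 : c 0 = u := by simp [hcdef]
  rw [hc0] at hslope
  have : ⟪f' u, u - z⟫ = -⟪f' u, z - u⟫ := by
    rw [← inner_neg_right]; congr 1; abel
  linarith [hslope, this.ge, this.le]


theorem stmt_9 {H : Type*} [NormedAddCommGroup H] [InnerProductSpace ℝ H] [CompleteSpace H]
    (f : H → ℝ) (f' : H → H)
    (hf : ∀ y, HasGradientAt f (f' y) y)
    (hconv : ConvexOn ℝ univ f)
    (z : H) (hz : ∀ y, f z ≤ f y)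
    (fstar : ℝ) (hfstar : fstar = f z)
    (t₀ : ℝ) (x x' x'' : ℝ → H)
    (hx : ∀ t, HasDerivAt x (x' t) t)
    (hx' : ∀ t, HasDerivAt x' (x'' t) t)
    (E : ℝ → ℝ) (hE : ∀ t, E t = f (x t) - fstar + ‖x' t‖ ^ 2 / 2)
    (hODE : ∀ t ≥ t₀, x'' t + Real.sqrt (E t) • x' t + f' (x t) = 0)
    (hbdd : ∃ M : ℝ, ∀ t ≥ t₀, ‖x t‖ ≤ M) :
    ∀ δ > (0 : ℝ),
      Tendsto (fun t => t ^ (2 - δ) * (f (x t) - fstar)) atTop (nhds 0) := by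
  intro δ hδ
  have hθ0 : ∀ t, 0 ≤ f (x t) - fstar := fun t => by
    rw [hfstar]; linarith [hz (x t)]
  have hθE : ∀ t, f (x t) - fstar ≤ E t := fun t => by
    rw [hE t]; nlinarith [sq_nonneg ‖x' t‖]
  have hE0 : ∀ t, 0 ≤ E t := fun t => by
    rw [hE t]; nlinarith [sq_nonneg ‖x' t‖, hθ0 t]
  -- derivative of E
  set Ed : ℝ → ℝ := fun t => ⟪f' (x t), x' t⟫ + ⟪x'' t, x' t⟫ with hEddef
  have hd1 : ∀ t, HasDerivAt (fun u => f (x u)) ⟪f' (x t), x' t⟫ t := by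
    intro t
    have := ((hf (x t)).hasFDerivAt).comp_hasDerivAt t (hx t)
    have h2 : HasDerivAt (f ∘ x) ⟪f' (x t), x' t⟫ t := by simpa [toDual_apply_apply] using this
    exact h2
  have hd2 : ∀ t, HasDerivAt (fun u => ‖x' u‖ ^ 2 / 2) ⟪x'' t, x' t⟫ t := by
    intro t
    have h := ((hx' t).inner ℝ (hx' t)).div_const 2
    have heq : (fun u => (⟪x' u, x' u⟫ : ℝ) / 2) = fun u => ‖x' u‖ ^ 2 / 2 := by
      funext u; rw [real_inner_self_eq_norm_sq]
    rw [heq] at h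
    refine HasDerivAt.congr_deriv h ?_
    rw [real_inner_comm (x' t) (x'' t)]
    ring
  have hdE : ∀ t, HasDerivAt E (Ed t) t := by
    intro t
    have hEfun : E = fun u => f (x u) - fstar + ‖x' u‖ ^ 2 / 2 := funext hE
    rw [hEfun]
    exact (((hd1 t).sub_const fstar)).add (hd2 t)
  -- value of Ed on [t₀, ∞)
  have hxpp : ∀ t, t₀ ≤ t → f' (x t) + x'' t = -(Real.sqrt (E t) • x' t) := by
    intro t ht
    have h := hODE t ht
    have h' : (f' (x t) + x'' t) + Real.sqrt (E t) • x' t = 0 := by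
      rw [← h]; abel
    exact eq_neg_of_add_eq_zero_left h'
  have hEdval : ∀ t, t₀ ≤ t → Ed t = -(Real.sqrt (E t) * ‖x' t‖ ^ 2) := by
    intro t ht
    have : Ed t = ⟪f' (x t) + x'' t, x' t⟫ := by
      rw [hEddef]; rw [inner_add_left]
    rw [this, hxpp t ht, inner_neg_left, real_inner_smul_left, real_inner_self_eq_norm_sq]
  -- E is antitone on [t₀, ∞)
  have hEan : ∀ u t, t₀ ≤ u → u ≤ t → E t ≤ E u := by
    have hanti : AntitoneOn E (Ici t₀) := by
      apply antitoneOn_of_deriv_nonpos (convex_Ici t₀)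
      · exact fun t _ => (hdE t).continuousAt.continuousWithinAt
      · exact fun t _ => (hdE t).differentiableAt.differentiableWithinAt
      · intro t ht
        rw [interior_Ici] at ht
        rw [(hdE t).deriv, hEdval t (le_of_lt ht)]
        have := Real.sqrt_nonneg (E t)
        nlinarith [sq_nonneg ‖x' t‖]
    exact fun u t hu hut => hanti hu (le_trans hu hut) hut
  by_cases hpos : ∀ t, t₀ ≤ t → 0 < E t
  · -- main case
    obtain ⟨M, hM⟩ := hbdd
    set R : ℝ := M + ‖z‖ with hRdef
    have hR0 : 0 ≤ R := by
      have := hM t₀ le_rfl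
      have := norm_nonneg (x t₀); have := norm_nonneg z
      linarith
    have hxz : ∀ t, t₀ ≤ t → ‖x t - z‖ ≤ R := fun t ht =>
      le_trans (norm_sub_le _ _) (add_le_add_left (hM t ht) _)
    set b : ℝ → ℝ := fun u => Real.sqrt (E u) with hbdef
    have hb0 : ∀ t, 0 ≤ b t := fun t => Real.sqrt_nonneg _
    have hb2 : ∀ t, b t ^ 2 = E t := fun t => Real.sq_sqrt (hE0 t)
    have hvb : ∀ t, t₀ ≤ t → ‖x' t‖ ≤ Real.sqrt 2 * b t := by
      intro t ht
      have h1 : ‖x' t‖ ^ 2 ≤ 2 * E t := by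
        have := hθ0 t; rw [hE t]; linarith
      calc ‖x' t‖ = Real.sqrt (‖x' t‖ ^ 2) := (Real.sqrt_sq (norm_nonneg _)).symm
        _ ≤ Real.sqrt (2 * E t) := Real.sqrt_le_sqrt h1
        _ = Real.sqrt 2 * b t := Real.sqrt_mul (by norm_num) _
    set p : ℝ → ℝ := fun u => ⟪x u - z, x' u⟫ with hpdef
    set hh : ℝ → ℝ := fun u => (⟪x u - z, x u - z⟫ : ℝ) / 2 with hhdef
    have hhh0 : ∀ t, 0 ≤ hh t := fun t => by
      simp only [hhdef]
      exact div_nonneg real_inner_self_nonneg (by norm_num)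
    have hhhR : ∀ t, t₀ ≤ t → hh t ≤ R ^ 2 / 2 := by
      intro t ht
      simp only [hhdef, real_inner_self_eq_norm_sq]
      have := hxz t ht
      nlinarith [norm_nonneg (x t - z)]
    have hhp : ∀ t, HasDerivAt hh (p t) t := by
      intro t
      have h := (((hx t).sub_const z).inner ℝ ((hx t).sub_const z)).div_const 2
      have e : ((⟪x t - z, x' t⟫ : ℝ) + ⟪x' t, x t - z⟫) / 2 = p t := by
        have hcomm : (⟪x' t, x t - z⟫ : ℝ) = ⟪x t - z, x' t⟫ := real_inner_comm _ _
        simp only [hpdef]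
        linarith [hcomm]
      rw [e] at h
      exact h
    have hpd : ∀ t, HasDerivAt p ((⟪x t - z, x'' t⟫ : ℝ) + ⟪x' t, x' t⟫) t := fun t =>
      ((hx t).sub_const z).inner ℝ (hx' t)
    set bd : ℝ → ℝ := fun t => Ed t / (2 * Real.sqrt (E t)) with hbddef
    have hbD : ∀ t, t₀ ≤ t → HasDerivAt b (bd t) t := fun t ht =>
      (hdE t).sqrt (ne_of_gt (hpos t ht))
    have hbdval : ∀ t, t₀ ≤ t → bd t = -(‖x' t‖ ^ 2 / 2) := by
      intro t ht
      have hbne : Real.sqrt (E t) ≠ 0 := ne_of_gt (Real.sqrt_pos.mpr (hpos t ht))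
      simp only [hbddef]
      rw [hEdval t ht]
      field_simp
    have hbdneg : ∀ t, t₀ ≤ t → bd t ≤ 0 := by
      intro t ht
      rw [hbdval t ht]
      have : (0:ℝ) ≤ ‖x' t‖ ^ 2 / 2 := by positivity
      linarith
    set K : ℝ → ℝ := fun u => p u + b u * hh u + 2 * b u with hKdef
    set Kd : ℝ → ℝ := fun t => ((⟪x t - z, x'' t⟫ : ℝ) + ⟪x' t, x' t⟫)
        + (bd t * hh t + b t * p t) + 2 * bd t with hKddef
    have hKD : ∀ t, t₀ ≤ t → HasDerivAt K (Kd t) t := fun t ht =>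
      ((hpd t).add ((hbD t ht).mul (hhp t))).add ((hbD t ht).const_mul 2)
    have hsum : ∀ t, t₀ ≤ t → Kd t + bd t ≤ -(E t) := by
      intro t ht
      have hxppt : x'' t = -(b t • x' t) - f' (x t) := by
        have h := hxpp t ht
        have : x'' t = -(Real.sqrt (E t) • x' t) - f' (x t) := by
          rw [← h]; abel
        simpa [hbdef] using this
      have hiner : (⟪x t - z, x'' t⟫ : ℝ) = -(b t * p t) - ⟪x t - z, f' (x t)⟫ := by
        rw [hxppt, inner_sub_right, inner_neg_right, real_inner_smul_right]
        try simp only [hpdef]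
      have hcvx : f (x t) - fstar ≤ ⟪x t - z, f' (x t)⟫ := by
        have h := grad_convex_ineq_s9 f f' hf hconv (x t) z
        rw [hfstar]
        rw [real_inner_comm]
        exact h
      have hbdv : bd t = -(‖x' t‖ ^ 2 / 2) := hbdval t ht
      have hbdh : bd t * hh t ≤ 0 := mul_nonpos_of_nonpos_of_nonneg (hbdneg t ht) (hhh0 t)
      have hinn : (⟪x' t, x' t⟫ : ℝ) = ‖x' t‖ ^ 2 := real_inner_self_eq_norm_sq _
      have hEt : E t = (f (x t) - fstar) + ‖x' t‖ ^ 2 / 2 := hE t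
      simp only [hKddef]
      rw [hiner, hinn]
      rw [hbdv] at hbdh ⊢
      linarith [hbdh, hcvx, hEt]
    set C₂ : ℝ := Real.sqrt 2 * R + R ^ 2 / 2 + 3 with hC₂def
    have hC₂ : 0 ≤ C₂ := by
      clear_value R C₂
      rw [hC₂def]
      have h1 : (0:ℝ) ≤ Real.sqrt 2 * R := mul_nonneg (Real.sqrt_nonneg 2) hR0
      have h2 : (0:ℝ) ≤ R ^ 2 / 2 := by positivity
      linarith
    have hKb : ∀ t, t₀ ≤ t → |K t + b t| ≤ C₂ * b t := by
      intro t ht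
      have hp_abs : |p t| ≤ Real.sqrt 2 * R * b t := by
        have h1 : |p t| ≤ ‖x t - z‖ * ‖x' t‖ := abs_real_inner_le_norm _ _
        have h2 : ‖x t - z‖ * ‖x' t‖ ≤ R * (Real.sqrt 2 * b t) := by
          apply mul_le_mul (hxz t ht) (hvb t ht) (norm_nonneg _) hR0
        calc |p t| ≤ R * (Real.sqrt 2 * b t) := le_trans h1 h2
          _ = Real.sqrt 2 * R * b t := by ring
      clear_value R b p hh K C₂
      have hbh : |b t * hh t| ≤ R ^ 2 / 2 * b t := by
        rw [abs_mul, abs_of_nonneg (hb0 t), abs_of_nonneg (hhh0 t)]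
        calc b t * hh t ≤ b t * (R ^ 2 / 2) :=
              mul_le_mul_of_nonneg_left (hhhR t ht) (hb0 t)
          _ = R ^ 2 / 2 * b t := by ring
      calc |K t + b t| = |p t + b t * hh t + 3 * b t| := by
            simp only [hKdef]; ring_nf
        _ ≤ |p t + b t * hh t| + |3 * b t| := abs_add_le _ _
        _ ≤ |p t| + |b t * hh t| + |3 * b t| := by linarith [abs_add_le (p t) (b t * hh t)]
        _ ≤ Real.sqrt 2 * R * b t + R ^ 2 / 2 * b t + 3 * b t := by
            have h3 : |3 * b t| = 3 * b t := abs_of_nonneg (by linarith [hb0 t])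
            linarith [hp_abs, hbh]
        _ = C₂ * b t := by rw [hC₂def]; ring
    -- apply the abstract rate lemma
    obtain ⟨C', T₂, hC', hT₂, hrate⟩ :=
      boot_rate t₀ E K bd Kd C₂ hC₂ (fun t _ => hE0 t) hEan hbD hKD hsum hKb
        (δ / 2) (by positivity)
    -- squeeze
    apply squeeze_zero' (g := fun t => C' * t ^ (-(δ / 2)))
    · filter_upwards [eventually_ge_atTop (0 : ℝ)] with t ht
      exact mul_nonneg (Real.rpow_nonneg ht _) (hθ0 t)
    · filter_upwards [eventually_ge_atTop (max T₂ 1)] with t ht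
      have ht1 : (1 : ℝ) ≤ t := le_trans (le_max_right _ _) ht
      have htpos : (0 : ℝ) < t := by linarith
      have hrt := hrate t (le_trans (le_max_left _ _) ht)
      calc t ^ (2 - δ) * (f (x t) - fstar) ≤ t ^ (2 - δ) * E t :=
            mul_le_mul_of_nonneg_left (hθE t) (Real.rpow_nonneg htpos.le _)
        _ ≤ t ^ (2 - δ) * (C' * t ^ (δ / 2 - 2)) :=
            mul_le_mul_of_nonneg_left hrt (Real.rpow_nonneg htpos.le _)
        _ = C' * (t ^ (2 - δ) * t ^ (δ / 2 - 2)) := by ring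
        _ = C' * t ^ (-(δ / 2)) := by
            rw [← Real.rpow_add htpos]
            congr 1
            ring
    · have h := (tendsto_rpow_neg_atTop (by positivity : (0:ℝ) < δ / 2)).const_mul C'
      simpa using h
  · -- degenerate case : E hits zero
    push_neg at hpos
    obtain ⟨t₁, ht₁, hE1⟩ := hpos
    have hzero : ∀ t, t₁ ≤ t → f (x t) - fstar = 0 := by
      intro t ht
      have h1 : E t ≤ E t₁ := hEan t₁ t ht₁ ht
      have h2 : f (x t) - fstar ≤ 0 := le_trans (hθE t) (by linarith)
      linarith [hθ0 t]
    have heq : (fun t => t ^ (2 - δ) * (f (x t) - fstar)) =ᶠ[atTop] (fun _ => (0 : ℝ)) := by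
      filter_upwards [eventually_ge_atTop t₁] with t ht
      rw [hzero t ht, mul_zero]
    exact Tendsto.congr' heq.symm tendsto_const_nhds
end

section
/- In the setting of the Lyapunov-damped system (LD), for a non-constant bounded solution x (with f convex, C¹, attaining its minimum), there exists no α > 1 such that lim_{t→∞} t^α √(E(t)) = 0. Equivalently, ∫_{t₀}^{∞} √(E(t)) dt = ∞. -/
open Set Filter MeasureTheory

local notation "⟪" x ", " y "⟫" => @inner ℝ _ _ x y

theorem stmt_10 {H : Type*} [NormedAddCommGroup H] [InnerProductSpace ℝ H] [CompleteSpace H]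
    (f : H → ℝ) (f' : H → H)
    (hf : ∀ y, HasGradientAt f (f' y) y)
    (hconv : ConvexOn ℝ univ f)
    (z : H) (hz : ∀ y, f z ≤ f y)
    (fstar : ℝ) (hfstar : fstar = f z)
    (t₀ : ℝ) (x x' x'' : ℝ → H)
    (hx : ∀ t, HasDerivAt x (x' t) t)
    (hx' : ∀ t, HasDerivAt x' (x'' t) t)
    (E : ℝ → ℝ) (hE : ∀ t, E t = f (x t) - fstar + ‖x' t‖ ^ 2 / 2)
    (hODE : ∀ t ≥ t₀, x'' t + Real.sqrt (E t) • x' t + f' (x t) = 0)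
    (hbdd : ∃ M : ℝ, ∀ t ≥ t₀, ‖x t‖ ≤ M)
    (hnc : ∃ s t : ℝ, s ≥ t₀ ∧ t ≥ t₀ ∧ x s ≠ x t) :
    (¬ ∃ α > (1 : ℝ), Tendsto (fun t => t ^ α * Real.sqrt (E t)) atTop (nhds 0)) ∧
      ¬ IntegrableOn (fun t => Real.sqrt (E t)) (Ici t₀) := by
  -- E is nonnegative
  have hE0 : ∀ t, 0 ≤ E t := by
    intro t
    rw [hE t, hfstar]
    have h1 : 0 ≤ f (x t) - f z := sub_nonneg.2 (hz (x t))
    positivity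
  -- ‖x'‖² ≤ 2 E
  have hx'le : ∀ t, ‖x' t‖ ^ 2 ≤ 2 * E t := by
    intro t
    rw [hE t, hfstar]
    have h1 : 0 ≤ f (x t) - f z := sub_nonneg.2 (hz (x t))
    nlinarith
  -- derivative of E
  have hEd : ∀ t, HasDerivAt E (⟪f' (x t), x' t⟫ + ⟪x' t, x'' t⟫) t := by
    intro t
    have h1 : HasDerivAt (fun t => f (x t)) ⟪f' (x t), x' t⟫ t := by
      have := (hf (x t)).hasFDerivAt.comp_hasDerivAt t (hx t)
      simp at this
      exact this
    have h2 : HasDerivAt (fun t => ⟪x' t, x' t⟫ / 2) ⟪x' t, x'' t⟫ t := by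
      have := ((hx' t).inner ℝ (hx' t)).div_const 2
      exact this.congr_deriv (by rw [real_inner_comm (x'' t) (x' t)]; ring)
    have h3 : HasDerivAt (fun t => f (x t) - fstar + ⟪x' t, x' t⟫ / 2)
        (⟪f' (x t), x' t⟫ + ⟪x' t, x'' t⟫) t := ((h1.sub_const fstar).add h2)
    convert h3 using 2 with u
    rw [hE u, real_inner_self_eq_norm_sq]
  -- value of the derivative on [t₀, ∞)
  have hEd' : ∀ t ≥ t₀, HasDerivAt E (-(Real.sqrt (E t) * ‖x' t‖ ^ 2)) t := by
    intro t ht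
    have h := hEd t
    have hODEt : x'' t = -(Real.sqrt (E t) • x' t) - f' (x t) := by
      have := hODE t ht; linear_combination (norm := module) this
    rw [hODEt] at h
    convert h using 1
    rw [inner_sub_right, inner_neg_right, real_inner_smul_right,
      real_inner_self_eq_norm_sq, real_inner_comm]
    ring
  have hEc : Continuous E := continuous_iff_continuousAt.mpr fun t => (hEd t).continuousAt
  have hsqc : Continuous (fun t => Real.sqrt (E t)) := Real.continuous_sqrt.comp hEc
  -- E is antitone on [t₀, ∞)
  have hanti : AntitoneOn E (Ici t₀) := by
    apply antitoneOn_of_deriv_nonpos (convex_Ici t₀) hEc.continuousOn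
      (fun t ht => (hEd t).differentiableAt.differentiableWithinAt)
    intro t ht
    rw [interior_Ici] at ht
    rw [(hEd' t ht.le).deriv]
    exact neg_nonpos.2 (mul_nonneg (Real.sqrt_nonneg _) (by positivity))
  -- Second conjunct: non-integrability of √E on [t₀, ∞)
  have h2 : ¬ IntegrableOn (fun t => Real.sqrt (E t)) (Ici t₀) := by
    intro hInt
    rcases eq_or_lt_of_le (hE0 t₀) with hz0 | hpos
    · -- E t₀ = 0 : then x' ≡ 0 on [t₀,∞) and x is constant there
      have hx'0 : ∀ t ∈ Ici t₀, x' t = 0 := by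
        intro t ht
        have h1 : E t ≤ 0 := by rw [hz0]; exact hanti self_mem_Ici ht ht
        have h3 := hx'le t
        have : ‖x' t‖ ^ 2 = 0 := le_antisymm (by linarith) (by positivity)
        simpa [pow_eq_zero_iff] using this
      have hconst : ∀ s ∈ Ici t₀, ‖x s - x t₀‖ ≤ 0 * ‖s - t₀‖ := by
        intro s hs
        exact (convex_Ici t₀).norm_image_sub_le_of_norm_hasDerivWithin_le
          (fun t ht => (hx t).hasDerivWithinAt)
          (fun t ht => by rw [hx'0 t ht]; simp) self_mem_Ici hs
      obtain ⟨s, t, hs, ht, hne⟩ := hnc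
      apply hne
      have h1 := hconst s hs
      have h2 := hconst t ht
      simp only [zero_mul] at h1 h2
      have e1 : x s = x t₀ := by
        rwa [norm_le_zero_iff, sub_eq_zero] at h1
      have e2 : x t = x t₀ := by
        rwa [norm_le_zero_iff, sub_eq_zero] at h2
      rw [e1, e2]
    · -- E t₀ > 0 : Grönwall lower bound
      set I : ℝ := ∫ t in Ici t₀, Real.sqrt (E t) with hI
      have hInonneg : 0 ≤ I := setIntegral_nonneg measurableSet_Ici
        (fun t _ => Real.sqrt_nonneg _)
      set φ : ℝ → ℝ := fun t => ∫ s in t₀..t, Real.sqrt (E s) with hφ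
      have hφd : ∀ t, HasDerivAt φ (Real.sqrt (E t)) t := by
        intro t
        exact intervalIntegral.integral_hasDerivAt_right
          (hsqc.intervalIntegrable t₀ t)
          hsqc.aestronglyMeasurable.stronglyMeasurableAtFilter
          hsqc.continuousAt
      set G : ℝ → ℝ := fun t => E t * Real.exp (2 * φ t) with hG
      have hGd : ∀ t, HasDerivAt G
          ((⟪f' (x t), x' t⟫ + ⟪x' t, x'' t⟫) * Real.exp (2 * φ t)
            + E t * (Real.exp (2 * φ t) * (2 * Real.sqrt (E t)))) t := by
        intro t
        exact (hEd t).mul (((hφd t).const_mul 2).exp)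
      have hGmono : MonotoneOn G (Ici t₀) := by
        apply monotoneOn_of_deriv_nonneg (convex_Ici t₀)
          (continuous_iff_continuousAt.mpr fun t => (hGd t).continuousAt).continuousOn
          (fun t ht => (hGd t).differentiableAt.differentiableWithinAt)
        intro t ht
        rw [interior_Ici] at ht
        rw [(hGd t).deriv]
        have hd' := hEd' t ht.le
        have heq : ⟪f' (x t), x' t⟫ + ⟪x' t, x'' t⟫ = -(Real.sqrt (E t) * ‖x' t‖ ^ 2) := by
          have := (hEd t).unique hd'
          exact this
        rw [heq]
        have h1 : Real.sqrt (E t) * ‖x' t‖ ^ 2 ≤ Real.sqrt (E t) * (2 * E t) :=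
          mul_le_mul_of_nonneg_left (hx'le t) (Real.sqrt_nonneg _)
        have h2 : (0:ℝ) < Real.exp (2 * φ t) := Real.exp_pos _
        nlinarith [Real.sqrt_nonneg (E t), hE0 t]
      -- lower bound on E
      have hφle : ∀ t ≥ t₀, φ t ≤ I := by
        intro t ht
        rw [hφ]
        simp only
        rw [intervalIntegral.integral_of_le ht]
        exact setIntegral_mono_set hInt
          (Eventually.of_forall fun s => Real.sqrt_nonneg _)
          (HasSubset.Subset.eventuallyLE (fun s hs => hs.1.le))
      have hlow : ∀ t ≥ t₀, E t₀ * Real.exp (-(2 * I)) ≤ E t := by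
        intro t ht
        have h1 : G t₀ ≤ G t := hGmono self_mem_Ici ht ht
        have hφ0 : φ t₀ = 0 := by simp [hφ]
        have h2 : E t₀ ≤ E t * Real.exp (2 * φ t) := by
          simpa [hG, hφ0] using h1
        have h3 : Real.exp (2 * φ t) ≤ Real.exp (2 * I) := by
          apply Real.exp_le_exp.2; linarith [hφle t ht]
        have h4 : E t₀ ≤ E t * Real.exp (2 * I) :=
          h2.trans (mul_le_mul_of_nonneg_left h3 (hE0 t))
        rw [Real.exp_neg]
        rw [mul_inv_le_iff₀ (Real.exp_pos _)] at *
        linarith [h4]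
      -- √E is bounded below by a positive constant, contradicting integrability
      set c : ℝ := E t₀ * Real.exp (-(2 * I)) with hc
      have hcpos : 0 < c := mul_pos hpos (Real.exp_pos _)
      have hconstInt : IntegrableOn (fun _ : ℝ => Real.sqrt c) (Ici t₀) := by
        apply hInt.mono' aestronglyMeasurable_const
        filter_upwards [ae_restrict_mem measurableSet_Ici] with t ht
        rw [Real.norm_of_nonneg (Real.sqrt_nonneg _)]
        exact Real.sqrt_le_sqrt (hlow t ht)
      rw [integrableOn_const_iff] at hconstInt
      rcases hconstInt with h | h
      · exact absurd (enorm_eq_zero.1 h) (ne_of_gt (Real.sqrt_pos.2 hcpos))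
      · simp [Real.volume_Ici] at h
  refine ⟨?_, h2⟩
  rintro ⟨α, hα, htend⟩
  apply h2
  -- eventually t ^ α * √(E t) ≤ 1, i.e. √(E t) ≤ t ^ (-α)
  have hev : ∀ᶠ t in atTop, Real.sqrt (E t) ≤ t ^ (-α) := by
    have h1 : ∀ᶠ t in atTop, t ^ α * Real.sqrt (E t) ≤ 1 := by
      filter_upwards [htend.eventually (eventually_le_nhds one_pos)] with t ht
      exact ht
    filter_upwards [h1, eventually_gt_atTop 0] with t ht htpos
    have hp : 0 < t ^ α := Real.rpow_pos_of_pos htpos α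
    rw [Real.rpow_neg htpos.le, ← one_div, le_div_iff₀ hp]
    linarith [ht]
  obtain ⟨T, hT⟩ := eventually_atTop.mp hev
  set T' : ℝ := max T (max t₀ 1) with hT'
  have hT'1 : (1:ℝ) ≤ T' := le_max_of_le_right (le_max_right _ _)
  have hT'0 : (0:ℝ) < T' := lt_of_lt_of_le one_pos hT'1
  have hIoi : IntegrableOn (fun t => Real.sqrt (E t)) (Ioi T') := by
    have hrpow : IntegrableOn (fun t : ℝ => t ^ (-α)) (Ioi T') :=
      integrableOn_Ioi_rpow_of_lt (by linarith) hT'0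
    apply hrpow.mono' hsqc.aestronglyMeasurable.restrict
    filter_upwards [ae_restrict_mem measurableSet_Ioi] with t ht
    rw [Real.norm_of_nonneg (Real.sqrt_nonneg _)]
    exact hT t ((le_max_left _ _).trans ht.le)
  have hIcc : IntegrableOn (fun t => Real.sqrt (E t)) (Icc t₀ T') :=
    hsqc.integrableOn_Icc
  have : IntegrableOn (fun t => Real.sqrt (E t)) (Icc t₀ T' ∪ Ioi T') := hIcc.union hIoi
  apply this.mono_set
  intro s hs
  rcases le_or_gt s T' with h | h
  · exact Or.inl ⟨hs, h⟩
  · exact Or.inr h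
end

section
/- In the setting of the Lyapunov-damped system (LD), for all t ≥ t₀: E'(t) + 2√(E(t)) E(t) = 2√(E(t)) (f(x(t)) - f*) ≥ 0. Consequently, for all t ≥ t₀, E(t) ≥ E(t₀) · exp(-2 ∫_{t₀}^{t} √(E(s)) ds). -/
open Set Filter intervalIntegral

theorem stmt_11 {H : Type*} [NormedAddCommGroup H] [InnerProductSpace ℝ H] [CompleteSpace H]
    (f : H → ℝ) (f' : H → H)
    (hf : ∀ y, HasGradientAt f (f' y) y)
    (hconv : ConvexOn ℝ univ f)
    (fstar : ℝ) (hfstar : ∀ y, fstar ≤ f y)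
    (t₀ : ℝ) (x x' x'' : ℝ → H)
    (hx : ∀ t, HasDerivAt x (x' t) t)
    (hx' : ∀ t, HasDerivAt x' (x'' t) t)
    (E E' : ℝ → ℝ) (hE : ∀ t, E t = f (x t) - fstar + ‖x' t‖ ^ 2 / 2)
    (hODE : ∀ t ≥ t₀, x'' t + Real.sqrt (E t) • x' t + f' (x t) = 0)
    (hE' : ∀ t ≥ t₀, HasDerivAt E (E' t) t)
    (hE'eq : ∀ t ≥ t₀, E' t = -(Real.sqrt (E t) * ‖x' t‖ ^ 2)) :
    (∀ t ≥ t₀,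
      E' t + 2 * Real.sqrt (E t) * E t = 2 * Real.sqrt (E t) * (f (x t) - fstar) ∧
      0 ≤ 2 * Real.sqrt (E t) * (f (x t) - fstar)) ∧
    ∀ t ≥ t₀,
      E t ≥ E t₀ * Real.exp (-2 * ∫ s in t₀..t, Real.sqrt (E s)) := by
  have hsub : ∀ t, 0 ≤ f (x t) - fstar := fun t => sub_nonneg.2 (hfstar (x t))
  have hnn : ∀ t, 0 ≤ 2 * Real.sqrt (E t) * (f (x t) - fstar) := fun t =>
    mul_nonneg (mul_nonneg (by norm_num) (Real.sqrt_nonneg _)) (hsub t)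
  have heq : ∀ t ≥ t₀, E' t + 2 * Real.sqrt (E t) * E t
      = 2 * Real.sqrt (E t) * (f (x t) - fstar) := by
    intro t ht
    rw [hE'eq t ht, hE t]; ring
  refine ⟨fun t ht => ⟨heq t ht, hnn t⟩, ?_⟩
  -- continuity of E at points ≥ t₀
  have hEc : ∀ t ≥ t₀, ContinuousAt E t := fun t ht => (hE' t ht).continuousAt
  -- extended E, continuous everywhere
  set Ee : ℝ → ℝ := fun s => E (max s t₀) with hEe
  have hEecont : Continuous Ee := by
    rw [continuous_iff_continuousAt]
    intro s
    have hmax : Continuous fun s : ℝ => max s t₀ := continuous_id.max continuous_const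
    exact ContinuousAt.comp (x := s) (hEc (max s t₀) (le_max_right _ _)) hmax.continuousAt
  have hEeeq : ∀ s ≥ t₀, Ee s = E s := fun s hs => by simp [hEe, max_eq_left hs]
  set F : ℝ → ℝ := fun t => ∫ s in t₀..t, Real.sqrt (Ee s) with hF
  have hsqc : Continuous fun s => Real.sqrt (Ee s) := Real.continuous_sqrt.comp hEecont
  have hFd : ∀ t, HasDerivAt F (Real.sqrt (Ee t)) t := fun t =>
    (hsqc.integral_hasStrictDerivAt t₀ t).hasDerivAt
  set g : ℝ → ℝ := fun t => E t * Real.exp (2 * F t) with hg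
  have hgd : ∀ t ≥ t₀, HasDerivAt g
      (E' t * Real.exp (2 * F t) + E t * (Real.exp (2 * F t) * (2 * Real.sqrt (E t)))) t := by
    intro t ht
    have h1 : HasDerivAt (fun u => Real.exp (2 * F u))
        (Real.exp (2 * F t) * (2 * Real.sqrt (Ee t))) t :=
      ((hFd t).const_mul 2).exp
    rw [hEeeq t ht] at h1
    exact (hE' t ht).mul h1
  have hmono : MonotoneOn g (Ici t₀) := by
    apply monotoneOn_of_deriv_nonneg (convex_Ici t₀)
    · have hFcont : Continuous F :=
        continuous_iff_continuousAt.2 fun t => (hFd t).continuousAt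
      intro t ht
      exact ((hEc t ht).mul ((Real.continuous_exp.comp
        (continuous_const.mul hFcont)).continuousAt)).continuousWithinAt
    · intro t ht
      rw [interior_Ici] at ht
      exact ((hgd t (le_of_lt ht)).differentiableAt).differentiableWithinAt
    · intro t ht
      rw [interior_Ici] at ht
      rw [(hgd t (le_of_lt ht)).deriv]
      have : E' t * Real.exp (2 * F t) + E t * (Real.exp (2 * F t) * (2 * Real.sqrt (E t)))
          = (E' t + 2 * Real.sqrt (E t) * E t) * Real.exp (2 * F t) := by ring
      rw [this, heq t (le_of_lt ht)]
      exact mul_nonneg (hnn t) (Real.exp_pos _).le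
  intro t ht
  have hF0 : F t₀ = 0 := intervalIntegral.integral_same
  have hgle : g t₀ ≤ g t := hmono self_mem_Ici ht ht
  have hgt₀ : g t₀ = E t₀ := by simp [hg, hF0]
  have hFi : (∫ s in t₀..t, Real.sqrt (E s)) = F t := by
    refine intervalIntegral.integral_congr fun s hs => ?_
    rw [uIcc_of_le ht] at hs
    rw [hEeeq s hs.1]
  rw [hFi]
  have hexp := (Real.exp_pos (2 * F t))
  have key : E t₀ ≤ E t * Real.exp (2 * F t) := by rw [← hgt₀]; exact hgle
  have : E t₀ * Real.exp (-2 * F t) ≤ E t * Real.exp (2 * F t) * Real.exp (-2 * F t) :=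
    mul_le_mul_of_nonneg_right key (Real.exp_pos _).le
  rw [mul_assoc, ← Real.exp_add] at this
  simpa using this
end

section
/- Let f be convex C¹ with L-Lipschitz gradient and infimum f* attained; fix 0 < s ≤ 1/L. Consider the LYDIA iteration: given x_{k-1}, x_k, set E_k = f(x_k) - f* + (1/(2s))‖x_k - x_{k-1}‖², β_k = √(E_k/E_0), y_k = x_k + (1 - β_k)(x_k - x_{k-1}), x_{k+1} = y_k - s∇f(y_k). Then for all k: E_{k+1} ≤ E_k - (β_k/s)(1 - β_k/2)‖x_k - x_{k-1}‖² - (s/2)‖∇f(x_k) - ∇f(y_k)‖². -/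
open Set Filter

section Helpers

local notation "⟪" x ", " y "⟫" => @inner ℝ _ _ x y

variable {H : Type*} [NormedAddCommGroup H] [InnerProductSpace ℝ H] [CompleteSpace H]

lemma line_hasDerivAt (a b : H) (t : ℝ) :
    HasDerivAt (fun t : ℝ => a + t • (b - a)) (b - a) t := by
  simpa using ((hasDerivAt_id t).smul_const (b - a)).const_add a

lemma comp_line_hasDerivAt (f : H → ℝ) (f' : H → H) (hf : ∀ y, HasGradientAt f (f' y) y)
    (a b : H) (t : ℝ) :
    HasDerivAt (fun t : ℝ => f (a + t • (b - a))) ⟪f' (a + t • (b - a)), b - a⟫ t := by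
  have h1 := ((hf (a + t • (b - a))).hasFDerivAt).comp_hasDerivAt t (line_hasDerivAt a b t)
  simpa [InnerProductSpace.toDual_apply_apply, Function.comp_def] using h1

lemma smooth_upper (f : H → ℝ) (f' : H → H) (hf : ∀ y, HasGradientAt f (f' y) y)
    (L : ℝ) (hL : 0 < L) (hlip : LipschitzWith (Real.toNNReal L) f') (a b : H) :
    f b ≤ f a + ⟪f' a, b - a⟫ + L / 2 * ‖b - a‖ ^ 2 := by
  set c : ℝ := ⟪f' a, b - a⟫ with hc
  set N : ℝ := ‖b - a‖ ^ 2 with hN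
  set h : ℝ → ℝ := fun t => f (a + t • (b - a)) - t * c - L / 2 * N * t ^ 2 with hh
  have hderiv : ∀ t : ℝ, HasDerivAt h (⟪f' (a + t • (b - a)), b - a⟫ - c - L * N * t) t := by
    intro t
    have h1 := ((comp_line_hasDerivAt f f' hf a b t).sub ((hasDerivAt_id t).mul_const c)).sub
      (((hasDerivAt_pow 2 t)).const_mul (L / 2 * N))
    exact h1.congr_deriv (by ring)
  have hanti : AntitoneOn h (Icc (0:ℝ) 1) := by
    apply antitoneOn_of_deriv_nonpos (convex_Icc 0 1)
    · exact fun t _ => (hderiv t).continuousAt.continuousWithinAt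
    · exact fun t _ => (hderiv t).differentiableAt.differentiableWithinAt
    · intro t ht
      rw [interior_Icc] at ht
      rw [(hderiv t).deriv]
      have key : ⟪f' (a + t • (b - a)) - f' a, b - a⟫ ≤ L * N * t := by
        have h2 : ⟪f' (a + t • (b - a)) - f' a, b - a⟫
            ≤ ‖f' (a + t • (b - a)) - f' a‖ * ‖b - a‖ := real_inner_le_norm _ _
        have h3 : ‖f' (a + t • (b - a)) - f' a‖ ≤ L * (t * ‖b - a‖) := by
          have := hlip.dist_le_mul (a + t • (b - a)) a
          rw [dist_eq_norm, dist_eq_norm, Real.coe_toNNReal L hL.le] at this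
          have he : a + t • (b - a) - a = t • (b - a) := by abel
          rw [he, norm_smul, Real.norm_eq_abs, abs_of_pos ht.1] at this
          linarith [this]
        calc ⟪f' (a + t • (b - a)) - f' a, b - a⟫ ≤ ‖f' (a + t • (b - a)) - f' a‖ * ‖b - a‖ := h2
          _ ≤ L * (t * ‖b - a‖) * ‖b - a‖ := by
              apply mul_le_mul_of_nonneg_right h3 (norm_nonneg _)
          _ = L * N * t := by rw [hN]; ring
      have hexp : ⟪f' (a + t • (b - a)), b - a⟫ - c
          = ⟪f' (a + t • (b - a)) - f' a, b - a⟫ := by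
        rw [inner_sub_left, hc]
      linarith [key, hexp.le, hexp.ge]
  have h01 := hanti (left_mem_Icc.2 zero_le_one) (right_mem_Icc.2 zero_le_one) zero_le_one
  have h0 : h 0 = f a := by simp [hh]
  have h1 : h 1 = f b - c - L / 2 * N := by simp [hh]
  rw [h0, h1] at h01
  linarith

lemma convex_lower (f : H → ℝ) (f' : H → H) (hf : ∀ y, HasGradientAt f (f' y) y)
    (hconv : ConvexOn ℝ univ f) (a b : H) :
    f a + ⟪f' a, b - a⟫ ≤ f b := by
  set g : ℝ → ℝ := fun t => f (a + t • (b - a)) with hg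
  have hgc : ConvexOn ℝ univ g := by
    have := hconv.comp_affineMap (AffineMap.lineMap a b : ℝ →ᵃ[ℝ] H)
    have he : ∀ t : ℝ, (AffineMap.lineMap a b : ℝ →ᵃ[ℝ] H) t = a + t • (b - a) := by
      intro t
      rw [AffineMap.lineMap_apply_module]
      module
    have he2 : f ∘ (AffineMap.lineMap a b : ℝ →ᵃ[ℝ] H) = g := by
      funext t
      rw [Function.comp_apply, he t]
    rw [he2, preimage_univ] at this
    exact this
  have hd : HasDerivAt g ⟪f' a, b - a⟫ 0 := by
    have := comp_line_hasDerivAt f f' hf a b 0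
    simpa using this
  have := hgc.le_slope_of_hasDerivAt (mem_univ (0:ℝ)) (mem_univ 1) one_pos hd
  have hs : slope g 0 1 = f b - f a := by
    simp [slope_def_field, hg]
  rw [hs] at this
  linarith

lemma grad_step (f : H → ℝ) (f' : H → H) (hf : ∀ y, HasGradientAt f (f' y) y)
    (L : ℝ) (hL : 0 < L) (hlip : LipschitzWith (Real.toNNReal L) f')
    (s : ℝ) (hs0 : 0 < s) (hs : s ≤ 1 / L) (a : H) :
    f (a - s • f' a) ≤ f a - s / 2 * ‖f' a‖ ^ 2 := by
  have h := smooth_upper f f' hf L hL hlip a (a - s • f' a)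
  have he : a - s • f' a - a = -(s • f' a) := by abel
  rw [he] at h
  have hi : ⟪f' a, -(s • f' a)⟫ = -(s * ‖f' a‖ ^ 2) := by
    rw [inner_neg_right, real_inner_smul_right, real_inner_self_eq_norm_sq]
  have hn : ‖-(s • f' a)‖ ^ 2 = s ^ 2 * ‖f' a‖ ^ 2 := by
    rw [norm_neg, norm_smul, Real.norm_eq_abs, mul_pow, sq_abs]
  rw [hi, hn] at h
  have hsL : L * s ≤ 1 := by
    rw [le_div_iff₀ hL] at hs
    linarith
  nlinarith [sq_nonneg ‖f' a‖, hs0]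

lemma cocoercive (f : H → ℝ) (f' : H → H) (hf : ∀ y, HasGradientAt f (f' y) y)
    (hconv : ConvexOn ℝ univ f)
    (L : ℝ) (hL : 0 < L) (hlip : LipschitzWith (Real.toNNReal L) f')
    (s : ℝ) (hs0 : 0 < s) (hs : s ≤ 1 / L) (x y₀ : H) :
    f y₀ + ⟪f' y₀, x - y₀⟫ + s / 2 * ‖f' x - f' y₀‖ ^ 2 ≤ f x := by
  set c : H := f' y₀ with hcdef
  set φ : H → ℝ := fun w => f w - ⟪c, w⟫ with hφ
  set φ' : H → H := fun w => f' w - c with hφ'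
  have hφg : ∀ w, HasGradientAt φ (φ' w) w := by
    intro w
    have hfun : (fun w : H => (⟪c, w⟫ : ℝ)) = ⇑(innerSL ℝ c) := by
      funext v; simp
    have h1 : HasFDerivAt (fun w : H => (⟪c, w⟫ : ℝ)) (innerSL ℝ c) w := by
      rw [hfun]; exact (innerSL ℝ c).hasFDerivAt
    have h2 := (hf w).hasFDerivAt.sub h1
    have heq : (InnerProductSpace.toDual ℝ H) (f' w - c)
        = (InnerProductSpace.toDual ℝ H) (f' w) - innerSL ℝ c := by
      ext v
      simp [InnerProductSpace.toDual_apply_apply, inner_sub_left]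
    show HasGradientAt φ (f' w - c) w
    rw [hasGradientAt_iff_hasFDerivAt, heq]
    exact h2
  have hφconv : ConvexOn ℝ univ φ := by
    have hlin : ConcaveOn ℝ univ (fun w : H => (⟪c, w⟫ : ℝ)) := by
      refine ⟨convex_univ, fun x _ y _ p q hp hq hpq => ?_⟩
      simp [inner_add_right, real_inner_smul_right]
    simpa [Pi.sub_def] using hconv.sub hlin
  have hφlip : LipschitzWith (Real.toNNReal L) φ' := by
    apply LipschitzWith.of_dist_le_mul
    intro a b
    have := hlip.dist_le_mul a b
    rw [Real.coe_toNNReal L hL.le] at this ⊢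
    simpa [hφ', dist_sub_right] using this
  have hmin : φ y₀ ≤ φ (x - s • φ' x) := by
    have := convex_lower φ φ' hφg hφconv y₀ (x - s • φ' x)
    have hz : φ' y₀ = 0 := by simp [hφ', hcdef]
    rw [hz] at this
    simpa using this
  have hdesc := grad_step φ φ' hφg L hL hφlip s hs0 hs x
  have hcomb : φ y₀ ≤ φ x - s / 2 * ‖φ' x‖ ^ 2 := le_trans hmin hdesc
  have hexp1 : φ y₀ = f y₀ - ⟪c, y₀⟫ := rfl
  have hexp2 : φ x = f x - ⟪c, x⟫ := rfl
  have hi : (⟪c, x - y₀⟫ : ℝ) = ⟪c, x⟫ - ⟪c, y₀⟫ := inner_sub_right _ _ _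
  rw [hexp1, hexp2] at hcomb
  have hφ'x : φ' x = f' x - c := rfl
  rw [hφ'x] at hcomb
  linarith

end Helpers

/-- LYDIA one-step decrease. Here `u k` denotes `x_{k-1}`, i.e. `u (k+1) = x_k`. -/
theorem stmt_13 {H : Type*} [NormedAddCommGroup H] [InnerProductSpace ℝ H] [CompleteSpace H]
    (f : H → ℝ) (f' : H → H)
    (hf : ∀ y, HasGradientAt f (f' y) y)
    (hconv : ConvexOn ℝ univ f)
    (L : ℝ) (hL : 0 < L) (hlip : LipschitzWith (Real.toNNReal L) f')
    (z : H) (hz : ∀ y, f z ≤ f y) (fstar : ℝ) (hfstar : fstar = f z)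
    (s : ℝ) (hs0 : 0 < s) (hs : s ≤ 1 / L)
    (u : ℕ → H) (E β : ℕ → ℝ) (y : ℕ → H)
    (hE : ∀ k, E k = f (u (k + 1)) - fstar + ‖u (k + 1) - u k‖ ^ 2 / (2 * s))
    (hE0 : 0 < E 0)
    (hβ : ∀ k, β k = Real.sqrt (E k / E 0))
    (hy : ∀ k, y k = u (k + 1) + (1 - β k) • (u (k + 1) - u k))
    (hiter : ∀ k, u (k + 2) = y k - s • f' (y k)) :
    ∀ k, E (k + 1) ≤ E k - (β k / s) * (1 - β k / 2) * ‖u (k + 1) - u k‖ ^ 2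
      - (s / 2) * ‖f' (u (k + 1)) - f' (y k)‖ ^ 2 := by
  intro k
  set x : H := u (k + 1) with hx
  set v : H := x - u k with hv
  set yk : H := y k with hyk
  set g : H := f' yk with hg
  set b : ℝ := β k with hb
  set N : ℝ := ‖v‖ ^ 2 with hN
  set D : ℝ := ‖f' x - g‖ ^ 2 with hD
  set I : ℝ := (inner ℝ g (yk - x) : ℝ) with hI
  -- descent step
  have hnext : u (k + 2) = yk - s • g := hiter k
  have h1 : f (u (k + 2)) ≤ f yk - s / 2 * ‖g‖ ^ 2 := by
    rw [hnext]
    exact grad_step f f' hf L hL hlip s hs0 hs yk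
  -- cocoercivity at (x, yk)
  have h2 : f yk + (inner ℝ g (x - yk) : ℝ) + s / 2 * D ≤ f x :=
    cocoercive f f' hf hconv L hL hlip s hs0 hs x yk
  have h2' : (inner ℝ g (x - yk) : ℝ) = -I := by
    rw [hI, ← inner_neg_right, neg_sub]
  rw [h2'] at h2
  -- norm identity
  have h3 : ‖u (k + 2) - x‖ ^ 2 = ‖yk - x‖ ^ 2 - 2 * s * I + s ^ 2 * ‖g‖ ^ 2 := by
    have he : u (k + 2) - x = (yk - x) - s • g := by rw [hnext]; abel
    rw [he, norm_sub_sq_real, real_inner_smul_right, norm_smul, Real.norm_eq_abs, mul_pow,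
      sq_abs, real_inner_comm, ← hI]
    ring
  -- y step identity
  have h4 : yk - x = (1 - b) • v := by
    rw [hyk, hy k, ← hb, ← hx, ← hv]
    abel
  have h4' : ‖yk - x‖ ^ 2 = (1 - b) ^ 2 * N := by
    rw [h4, norm_smul, Real.norm_eq_abs, mul_pow, sq_abs, hN]
  -- assemble
  have hEk1 : E (k + 1) = f (u (k + 2)) - fstar + ‖u (k + 2) - x‖ ^ 2 / (2 * s) := hE (k + 1)
  have hEk : E k = f x - fstar + N / (2 * s) := hE k
  have halg : (1 - b) ^ 2 * N / (2 * s) = N / (2 * s) - (b / s) * (1 - b / 2) * N := by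
    field_simp
    ring
  have hbound : E (k + 1) ≤ f x - fstar + (1 - b) ^ 2 * N / (2 * s) - s / 2 * D := by
    rw [hEk1, h3, h4']
    have hdiv : ((1 - b) ^ 2 * N - 2 * s * I + s ^ 2 * ‖g‖ ^ 2) / (2 * s)
        = (1 - b) ^ 2 * N / (2 * s) - I + s / 2 * ‖g‖ ^ 2 := by
      field_simp
    rw [hdiv]
    linarith
  rw [halg] at hbound
  rw [hEk]
  linarith
end

section
/- Under the LYDIA iteration with 0 < s ≤ 1/L: the series Σ_k √(E_k)‖x_k - x_{k-1}‖² and Σ_k ‖∇f(x_k) - ∇f(y_k)‖² converge; moreover ‖x_k - x_{k-1}‖ → 0, f(x_k) converges, and ‖∇f(x_k)‖ → 0 as k → ∞. -/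
open Set Filter
open scoped RealInnerProductSpace


lemma lydia_lineDeriv {H : Type*} [NormedAddCommGroup H] [InnerProductSpace ℝ H] [CompleteSpace H]
    {f : H → ℝ} {f' : H → H} (hf : ∀ y, HasGradientAt f (f' y) y) (a v : H) (t : ℝ) :
    HasDerivAt (fun t : ℝ => f (a + t • v)) ⟪f' (a + t • v), v⟫ t := by
  have h1 : HasDerivAt (fun t : ℝ => a + t • v) v t := by
    simpa using ((hasDerivAt_id t).smul_const v).const_add a
  have h2 := ((hf (a + t • v)).hasFDerivAt).comp_hasDerivAt t h1
  simpa [InnerProductSpace.toDual_apply_apply, Function.comp_def] using h2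

lemma lydia_grad_ineq {H : Type*} [NormedAddCommGroup H] [InnerProductSpace ℝ H] [CompleteSpace H]
    {f : H → ℝ} {f' : H → H} (hf : ∀ y, HasGradientAt f (f' y) y)
    (hconv : ConvexOn ℝ univ f) (a b : H) :
    f a + ⟪f' a, b - a⟫ ≤ f b := by
  set v := b - a with hv
  have hg : ConvexOn ℝ univ (fun t : ℝ => f (a + t • v)) := by
    have := hconv.comp_affineMap (AffineMap.lineMap a b)
    simp only [AffineMap.lineMap_apply_module, Set.preimage_univ] at this
    have h2 : (fun t : ℝ => f (a + t • v)) = (f ∘ (AffineMap.lineMap a b : ℝ →ᵃ[ℝ] H)) := by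
      funext t
      simp only [Function.comp_apply, AffineMap.lineMap_apply_module, hv]
      congr 1
      module
    rw [h2]
    simpa using this
  have hs := hg.le_slope_of_hasDerivAt (S := univ) (mem_univ (0:ℝ)) (mem_univ (1:ℝ))
    one_pos (by simpa using lydia_lineDeriv hf a v 0)
  simp [slope_def_field, hv] at hs
  linarith [hs]

lemma lydia_descent {H : Type*} [NormedAddCommGroup H] [InnerProductSpace ℝ H] [CompleteSpace H]
    {f : H → ℝ} {f' : H → H} (hf : ∀ y, HasGradientAt f (f' y) y)
    {L : ℝ} (hL : 0 < L) (hlip : LipschitzWith (Real.toNNReal L) f') (a b : H) :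
    f b ≤ f a + ⟪f' a, b - a⟫ + L / 2 * ‖b - a‖ ^ 2 := by
  set v := b - a with hv
  set g' : ℝ → ℝ := fun t => ⟪f' (a + t • v), v⟫ with hg'
  have hcont : Continuous g' := by
    apply Continuous.inner
    · exact hlip.continuous.comp (continuous_const.add (continuous_id.smul continuous_const))
    · exact continuous_const
  have hftc : ∫ t in (0:ℝ)..1, g' t = f (a + (1:ℝ) • v) - f (a + (0:ℝ) • v) := by
    apply intervalIntegral.integral_eq_sub_of_hasDerivAt (f := fun t : ℝ => f (a + t • v))
    · intro t _
      exact lydia_lineDeriv hf a v t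
    · exact hcont.intervalIntegrable 0 1
  have hbound : ∀ t ∈ Icc (0:ℝ) 1, g' t ≤ ⟪f' a, v⟫ + L * t * ‖v‖ ^ 2 := by
    intro t ht
    have h1 : g' t - ⟪f' a, v⟫ = ⟪f' (a + t • v) - f' a, v⟫ := by
      rw [inner_sub_left]
    have h2 : ⟪f' (a + t • v) - f' a, v⟫ ≤ ‖f' (a + t • v) - f' a‖ * ‖v‖ :=
      real_inner_le_norm _ _
    have h3 : ‖f' (a + t • v) - f' a‖ ≤ L * (t * ‖v‖) := by
      have := hlip.dist_le_mul (a + t • v) a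
      rw [dist_eq_norm, dist_eq_norm] at this
      have h4 : a + t • v - a = t • v := by abel
      rw [h4, norm_smul] at this
      have hLnn : (Real.toNNReal L : ℝ) = L := Real.coe_toNNReal L hL.le
      rw [hLnn] at this
      simpa [abs_of_nonneg ht.1, mul_assoc] using this
    nlinarith [norm_nonneg v, norm_nonneg (f' (a + t • v) - f' a), ht.1]
  have hint : ∫ t in (0:ℝ)..1, g' t ≤ ∫ t in (0:ℝ)..1, (⟪f' a, v⟫ + L * t * ‖v‖ ^ 2) := by
    apply intervalIntegral.integral_mono_on zero_le_one
      (hcont.intervalIntegrable 0 1)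
      ((continuous_const.add ((continuous_const.mul continuous_id).mul continuous_const)).intervalIntegrable 0 1)
    exact hbound
  have hrhs : ∫ t in (0:ℝ)..1, (⟪f' a, v⟫ + L * t * ‖v‖ ^ 2) = ⟪f' a, v⟫ + L / 2 * ‖v‖ ^ 2 := by
    have h1 : ∀ t : ℝ, ⟪f' a, v⟫ + L * t * ‖v‖ ^ 2 = ⟪f' a, v⟫ + (L * ‖v‖ ^ 2) * t := by
      intro t; ring
    simp only [h1]
    rw [intervalIntegral.integral_add intervalIntegrable_const
      (intervalIntegral.intervalIntegrable_id.const_mul _)]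
    rw [intervalIntegral.integral_const_mul, integral_id, intervalIntegral.integral_const]
    simp
    ring
  have h0 : a + (0:ℝ) • v = a := by simp
  have h1 : a + (1:ℝ) • v = b := by simp [hv]
  rw [hftc, h0, h1] at hint
  rw [hrhs] at hint
  linarith

lemma lydia_coco {H : Type*} [NormedAddCommGroup H] [InnerProductSpace ℝ H] [CompleteSpace H]
    {f : H → ℝ} {f' : H → H} (hf : ∀ y, HasGradientAt f (f' y) y)
    (hconv : ConvexOn ℝ univ f)
    {L : ℝ} (hL : 0 < L) (hlip : LipschitzWith (Real.toNNReal L) f') (a b : H) :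
    f b + ⟪f' b, a - b⟫ + 1 / (2 * L) * ‖f' a - f' b‖ ^ 2 ≤ f a := by
  set d := f' a - f' b with hd
  set c := a - (1 / L) • d with hc
  have h1 := lydia_descent hf hL hlip a c
  have h2 := lydia_grad_ineq hf hconv b c
  have hca : c - a = -((1 / L) • d) := by rw [hc]; abel
  have hcb : c - b = (a - b) - (1 / L) • d := by rw [hc]; abel
  rw [hca] at h1
  rw [hcb] at h2
  rw [inner_neg_right, real_inner_smul_right, norm_neg, norm_smul] at h1
  rw [inner_sub_right, real_inner_smul_right] at h2
  have hid : ⟪f' a, d⟫ - ⟪f' b, d⟫ = ‖d‖ ^ 2 := by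
    rw [← inner_sub_left, ← hd, real_inner_self_eq_norm_sq]
  have habs : ‖(1 / L : ℝ)‖ = 1 / L := by
    rw [Real.norm_eq_abs]; exact abs_of_pos (by positivity)
  rw [habs] at h1
  have hL' : L ≠ 0 := hL.ne'
  have hexp : L / 2 * (1 / L * ‖d‖) ^ 2 = 1 / (2 * L) * ‖d‖ ^ 2 := by
    field_simp
  rw [hexp] at h1
  have h5 : 1 / L * ⟪f' a, d⟫ - 1 / L * ⟪f' b, d⟫ = 1 / L * ‖d‖ ^ 2 := by
    rw [← mul_sub, hid]
  have h6 : 1 / L * ‖d‖ ^ 2 - 1 / (2 * L) * ‖d‖ ^ 2 = 1 / (2 * L) * ‖d‖ ^ 2 := by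
    field_simp; ring
  linarith

lemma lydia_key {H : Type*} [NormedAddCommGroup H] [InnerProductSpace ℝ H] [CompleteSpace H]
    {f : H → ℝ} {f' : H → H} (hf : ∀ y, HasGradientAt f (f' y) y)
    (hconv : ConvexOn ℝ univ f)
    {L : ℝ} (hL : 0 < L) (hlip : LipschitzWith (Real.toNNReal L) f')
    {s : ℝ} (hs0 : 0 < s) (hsL : s * L ≤ 1)
    (x w : H) (b : ℝ) (yk : H) (hyk : yk = x + (1 - b) • (x - w))
    (p : H) (hp : p = yk - s • f' yk) :
    f p + ‖p - x‖ ^ 2 / (2 * s) ≤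
      f x + ‖x - w‖ ^ 2 / (2 * s) - b * (2 - b) / (2 * s) * ‖x - w‖ ^ 2
        - s / 2 * ‖f' x - f' yk‖ ^ 2 := by
  set v := x - w with hv
  set g := f' yk with hg
  set d := f' x - g with hd
  have hA := lydia_descent hf hL hlip yk p
  have hB := lydia_coco hf hconv hL hlip x yk
  have hpy : p - yk = -(s • g) := by rw [hp]; abel
  rw [hpy, inner_neg_right, real_inner_smul_right, real_inner_self_eq_norm_sq,
      norm_neg, norm_smul, Real.norm_eq_abs, abs_of_pos hs0] at hA
  -- hA : f p ≤ f yk + -(s * ‖g‖^2) + L/2 * (s * ‖g‖)^2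
  have hA' : f p ≤ f yk - s * ‖g‖ ^ 2 + s / 2 * ‖g‖ ^ 2 := by
    nlinarith [sq_nonneg ‖g‖, hs0.le]
  have hxy : x - yk = -((1 - b) • v) := by rw [hyk]; abel
  rw [hxy, inner_neg_right, real_inner_smul_right] at hB
  -- hB : f yk + -( (1-b) * ⟪g, v⟫ ) + 1/(2L) ‖d‖² ≤ f x
  have hLd : s / 2 * ‖d‖ ^ 2 ≤ 1 / (2 * L) * ‖d‖ ^ 2 := by
    have h1 : s / 2 ≤ 1 / (2 * L) := by
      rw [div_le_div_iff₀ (by norm_num) (by positivity)]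
      nlinarith
    nlinarith [sq_nonneg ‖d‖]
  have hpx : p - x = (1 - b) • v - s • g := by rw [hp, hyk]; abel
  have hC : ‖p - x‖ ^ 2 =
      (1 - b) ^ 2 * ‖v‖ ^ 2 - 2 * s * (1 - b) * ⟪g, v⟫ + s ^ 2 * ‖g‖ ^ 2 := by
    rw [hpx, norm_sub_sq_real, norm_smul, norm_smul, real_inner_smul_left,
        real_inner_smul_right, Real.norm_eq_abs, Real.norm_eq_abs, abs_of_pos hs0,
        mul_pow, mul_pow, sq_abs, real_inner_comm v g]
    ring
  have hdiv1 : ‖p - x‖ ^ 2 / (2 * s) =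
      (1 - b) ^ 2 / (2 * s) * ‖v‖ ^ 2 - (1 - b) * ⟪g, v⟫ + s / 2 * ‖g‖ ^ 2 := by
    rw [hC]; field_simp
  have hdiv2 : (1 - b) ^ 2 / (2 * s) * ‖v‖ ^ 2 =
      ‖v‖ ^ 2 / (2 * s) - b * (2 - b) / (2 * s) * ‖v‖ ^ 2 := by
    field_simp; ring
  linarith

/-- LYDIA one-step decrease. Here `u k` denotes `x_{k-1}`, i.e. `u (k+1) = x_k`. -/
theorem stmt_15 {H : Type*} [NormedAddCommGroup H] [InnerProductSpace ℝ H] [CompleteSpace H]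
    (f : H → ℝ) (f' : H → H)
    (hf : ∀ y, HasGradientAt f (f' y) y)
    (hconv : ConvexOn ℝ univ f)
    (L : ℝ) (hL : 0 < L) (hlip : LipschitzWith (Real.toNNReal L) f')
    (z : H) (hz : ∀ y, f z ≤ f y) (fstar : ℝ) (hfstar : fstar = f z)
    (s : ℝ) (hs0 : 0 < s) (hs : s ≤ 1 / L)
    (u : ℕ → H) (E β : ℕ → ℝ) (y : ℕ → H)
    (hE : ∀ k, E k = f (u (k + 1)) - fstar + ‖u (k + 1) - u k‖ ^ 2 / (2 * s))
    (hE0 : 0 < E 0)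
    (hβ : ∀ k, β k = Real.sqrt (E k / E 0))
    (hy : ∀ k, y k = u (k + 1) + (1 - β k) • (u (k + 1) - u k))
    (hiter : ∀ k, u (k + 2) = y k - s • f' (y k)) :
    Summable (fun k => Real.sqrt (E k) * ‖u (k + 1) - u k‖ ^ 2) ∧
      Summable (fun k => ‖f' (u (k + 1)) - f' (y k)‖ ^ 2) ∧
      Tendsto (fun k => ‖u (k + 1) - u k‖) atTop (nhds 0) ∧
      (∃ l : ℝ, Tendsto (fun k => f (u (k + 1))) atTop (nhds l)) ∧
      Tendsto (fun k => ‖f' (u (k + 1))‖) atTop (nhds 0) := by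
  have hsL : s * L ≤ 1 := by
    have := (le_div_iff₀ hL).mp hs
    linarith
  have hflow : ∀ x, fstar ≤ f x := fun x => hfstar ▸ hz x
  have hEnn : ∀ k, 0 ≤ E k := by
    intro k
    rw [hE k]
    have h1 := hflow (u (k + 1))
    have h2 : (0:ℝ) ≤ ‖u (k + 1) - u k‖ ^ 2 / (2 * s) := by positivity
    linarith
  have key : ∀ k, E (k + 1) ≤ E k - β k * (2 - β k) / (2 * s) * ‖u (k + 1) - u k‖ ^ 2
      - s / 2 * ‖f' (u (k + 1)) - f' (y k)‖ ^ 2 := by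
    intro k
    have hk := lydia_key hf hconv hL hlip hs0 hsL (u (k + 1)) (u k) (β k) (y k) (hy k)
      (u (k + 2)) (hiter k)
    have e1 : E (k + 1) = f (u (k + 2)) - fstar + ‖u (k + 2) - u (k + 1)‖ ^ 2 / (2 * s) := hE (k + 1)
    rw [e1, hE k]
    linarith
  have hβnn : ∀ k, 0 ≤ β k := fun k => (hβ k) ▸ Real.sqrt_nonneg _
  have hβle : ∀ k, E k ≤ E 0 → β k ≤ 1 := by
    intro k hk
    rw [hβ k]
    exact Real.sqrt_le_one.mpr ((div_le_one hE0).mpr hk)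
  have hstep : ∀ k, E k ≤ E 0 → E (k + 1) ≤ E k := by
    intro k hk
    have h1 := key k
    have hb0 := hβnn k
    have hb1 := hβle k hk
    have t1 : 0 ≤ β k * (2 - β k) / (2 * s) * ‖u (k + 1) - u k‖ ^ 2 :=
      mul_nonneg (div_nonneg (mul_nonneg hb0 (by linarith)) (by positivity)) (sq_nonneg _)
    have t2 : 0 ≤ s / 2 * ‖f' (u (k + 1)) - f' (y k)‖ ^ 2 := by positivity
    linarith
  have hbd : ∀ k, E k ≤ E 0 := by
    intro k
    induction k with
    | zero => exact le_refl _
    | succ n ih => exact le_trans (hstep n ih) ih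
  have hmono : ∀ k, E (k + 1) ≤ E k := fun k => hstep k (hbd k)
  have hβ1 : ∀ k, β k ≤ 1 := fun k => hβle k (hbd k)
  -- telescoping sum
  have hDnn : ∀ k, 0 ≤ E k - E (k + 1) := fun k => by linarith [hmono k]
  have hDsum : Summable (fun k => E k - E (k + 1)) := by
    apply summable_of_sum_range_le hDnn
    intro n
    rw [Finset.sum_range_sub' E n]
    linarith [hEnn n]
  -- bound 1
  have hbound1 : ∀ k, Real.sqrt (E k) * ‖u (k + 1) - u k‖ ^ 2
      ≤ (2 * s * Real.sqrt (E 0)) * (E k - E (k + 1)) := by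
    intro k
    have h1 := key k
    have t2 : 0 ≤ s / 2 * ‖f' (u (k + 1)) - f' (y k)‖ ^ 2 := by positivity
    have h2 : β k * (2 - β k) / (2 * s) * ‖u (k + 1) - u k‖ ^ 2 ≤ E k - E (k + 1) := by
      linarith
    have h3 : β k * (2 - β k) * ‖u (k + 1) - u k‖ ^ 2 ≤ 2 * s * (E k - E (k + 1)) := by
      rw [div_mul_eq_mul_div, div_le_iff₀ (by positivity)] at h2
      linarith [h2]
    have h4 : β k * ‖u (k + 1) - u k‖ ^ 2 ≤ 2 * s * (E k - E (k + 1)) := by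
      nlinarith [mul_nonneg (mul_nonneg (hβnn k)
        (by linarith [hβ1 k] : (0:ℝ) ≤ 1 - β k)) (sq_nonneg ‖u (k + 1) - u k‖)]
    have h5 : Real.sqrt (E k) = Real.sqrt (E 0) * β k := by
      rw [hβ k, Real.sqrt_div (hEnn k)]
      have h6 : Real.sqrt (E 0) ≠ 0 := ne_of_gt (Real.sqrt_pos.mpr hE0)
      field_simp
    rw [h5]
    calc Real.sqrt (E 0) * β k * ‖u (k + 1) - u k‖ ^ 2
        = Real.sqrt (E 0) * (β k * ‖u (k + 1) - u k‖ ^ 2) := by ring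
      _ ≤ Real.sqrt (E 0) * (2 * s * (E k - E (k + 1))) :=
          mul_le_mul_of_nonneg_left h4 (Real.sqrt_nonneg _)
      _ = (2 * s * Real.sqrt (E 0)) * (E k - E (k + 1)) := by ring
  have S1 : Summable (fun k => Real.sqrt (E k) * ‖u (k + 1) - u k‖ ^ 2) := by
    apply Summable.of_nonneg_of_le
      (fun k => mul_nonneg (Real.sqrt_nonneg _) (sq_nonneg _)) hbound1
    exact hDsum.mul_left _
  -- bound 2
  have hbound2 : ∀ k, ‖f' (u (k + 1)) - f' (y k)‖ ^ 2 ≤ (2 / s) * (E k - E (k + 1)) := by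
    intro k
    have h1 := key k
    have hb0 := hβnn k
    have hb1 := hβ1 k
    have t1 : 0 ≤ β k * (2 - β k) / (2 * s) * ‖u (k + 1) - u k‖ ^ 2 :=
      mul_nonneg (div_nonneg (mul_nonneg hb0 (by linarith)) (by positivity)) (sq_nonneg _)
    have h2 : s / 2 * ‖f' (u (k + 1)) - f' (y k)‖ ^ 2 ≤ E k - E (k + 1) := by linarith
    rw [div_mul_eq_mul_div, div_le_iff₀ (by norm_num : (0:ℝ) < 2)] at h2
    rw [div_mul_eq_mul_div, le_div_iff₀ hs0]
    linarith
  have S2 : Summable (fun k => ‖f' (u (k + 1)) - f' (y k)‖ ^ 2) := by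
    apply Summable.of_nonneg_of_le (fun k => sq_nonneg _) hbound2
    exact hDsum.mul_left _
  -- E converges
  have hanti : Antitone E := antitone_nat_of_succ_le hmono
  have hbdd : BddBelow (range E) := ⟨0, by rintro x ⟨k, rfl⟩; exact hEnn k⟩
  have hEtend : Tendsto E atTop (nhds (⨅ k, E k)) := tendsto_atTop_ciInf hanti hbdd
  -- ‖v k‖ → 0
  have hvsq : ∀ k, ‖u (k + 1) - u k‖ ^ 2 ≤ 2 * s * E k := by
    intro k
    have h1 := hflow (u (k + 1))
    have h2 := hE k
    have h3 : ‖u (k + 1) - u k‖ ^ 2 / (2 * s) ≤ E k := by rw [h2]; linarith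
    rw [div_le_iff₀ (by positivity)] at h3
    linarith
  have hcube : ∀ k, ‖u (k + 1) - u k‖ ^ 3
      ≤ Real.sqrt (2 * s) * (Real.sqrt (E k) * ‖u (k + 1) - u k‖ ^ 2) := by
    intro k
    have h1 : ‖u (k + 1) - u k‖ ≤ Real.sqrt (2 * s) * Real.sqrt (E k) := by
      rw [← Real.sqrt_mul (by positivity)]
      exact (Real.le_sqrt (norm_nonneg _) (mul_nonneg (by positivity) (hEnn k))).mpr (hvsq k)
    have h2 : ‖u (k + 1) - u k‖ ^ 3 = ‖u (k + 1) - u k‖ * ‖u (k + 1) - u k‖ ^ 2 := by ring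
    rw [h2, ← mul_assoc]
    exact mul_le_mul_of_nonneg_right h1 (sq_nonneg _)
  have hT1 : Tendsto (fun k => Real.sqrt (E k) * ‖u (k + 1) - u k‖ ^ 2) atTop (nhds 0) :=
    S1.tendsto_atTop_zero
  have hv3 : Tendsto (fun k => ‖u (k + 1) - u k‖ ^ 3) atTop (nhds 0) := by
    have hlim : Tendsto (fun k => Real.sqrt (2 * s) *
        (Real.sqrt (E k) * ‖u (k + 1) - u k‖ ^ 2)) atTop (nhds 0) := by
      simpa using hT1.const_mul (Real.sqrt (2 * s))
    exact squeeze_zero (fun k => by positivity) hcube hlim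
  have hv : Tendsto (fun k => ‖u (k + 1) - u k‖) atTop (nhds 0) := by
    rw [Metric.tendsto_atTop] at hv3 ⊢
    intro ε hε
    obtain ⟨N, hN⟩ := hv3 (ε ^ 3) (by positivity)
    refine ⟨N, fun n hn => ?_⟩
    have h1 := hN n hn
    rw [Real.dist_eq, sub_zero] at h1 ⊢
    rw [abs_of_nonneg (by positivity)] at h1
    rw [abs_of_nonneg (norm_nonneg _)]
    exact lt_of_pow_lt_pow_left₀ 3 hε.le h1
  have hv2 : Tendsto (fun k => ‖u (k + 1) - u k‖ ^ 2 / (2 * s)) atTop (nhds 0) := by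
    have h1 := (hv.pow 2).div_const (2 * s)
    simpa using h1
  have hfconv : ∃ l, Tendsto (fun k => f (u (k + 1))) atTop (nhds l) := by
    refine ⟨(⨅ k, E k) - 0 + fstar, ?_⟩
    have hfun : (fun k => f (u (k + 1)))
        = fun k => E k - ‖u (k + 1) - u k‖ ^ 2 / (2 * s) + fstar := by
      funext k; rw [hE k]; ring
    rw [hfun]
    exact (hEtend.sub hv2).add tendsto_const_nhds
  have hLc : (Real.toNNReal L : ℝ) = L := Real.coe_toNNReal L hL.le
  have hgb : ∀ k, ‖f' (u (k + 1))‖ ≤ L * ‖u (k + 1) - u k‖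
      + (1 / s) * (‖u (k + 2) - u (k + 1)‖ + ‖u (k + 1) - u k‖) := by
    intro k
    have h1 : ‖f' (u (k + 1))‖ ≤ ‖f' (u (k + 1)) - f' (y k)‖ + ‖f' (y k)‖ := by
      simpa using norm_add_le (f' (u (k + 1)) - f' (y k)) (f' (y k))
    have h2 : ‖f' (u (k + 1)) - f' (y k)‖ ≤ L * ‖u (k + 1) - u k‖ := by
      have hd := hlip.dist_le_mul (u (k + 1)) (y k)
      rw [dist_eq_norm, dist_eq_norm, hLc] at hd
      have h3 : u (k + 1) - y k = -((1 - β k) • (u (k + 1) - u k)) := by rw [hy k]; abel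
      rw [h3, norm_neg, norm_smul, Real.norm_eq_abs,
        abs_of_nonneg (by linarith [hβ1 k])] at hd
      have h4 : (1 - β k) * ‖u (k + 1) - u k‖ ≤ ‖u (k + 1) - u k‖ := by
        nlinarith [hβnn k, norm_nonneg (u (k + 1) - u k), hβ1 k]
      calc ‖f' (u (k + 1)) - f' (y k)‖ ≤ L * ((1 - β k) * ‖u (k + 1) - u k‖) := hd
        _ ≤ L * ‖u (k + 1) - u k‖ := mul_le_mul_of_nonneg_left h4 hL.le
    have h5 : s • f' (y k) = (u (k + 1) - u (k + 2)) + (1 - β k) • (u (k + 1) - u k) := by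
      have h5a : s • f' (y k) = y k - u (k + 2) := by rw [hiter k]; abel
      rw [h5a, hy k]; abel
    have h7 : s * ‖f' (y k)‖ = ‖s • f' (y k)‖ := by
      rw [norm_smul, Real.norm_eq_abs, abs_of_pos hs0]
    have h8 : ‖s • f' (y k)‖ ≤ ‖u (k + 2) - u (k + 1)‖ + ‖u (k + 1) - u k‖ := by
      rw [h5]
      calc ‖(u (k + 1) - u (k + 2)) + (1 - β k) • (u (k + 1) - u k)‖
          ≤ ‖u (k + 1) - u (k + 2)‖ + ‖(1 - β k) • (u (k + 1) - u k)‖ := norm_add_le _ _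
        _ ≤ ‖u (k + 2) - u (k + 1)‖ + ‖u (k + 1) - u k‖ := by
            rw [norm_sub_rev, norm_smul, Real.norm_eq_abs,
              abs_of_nonneg (by linarith [hβ1 k])]
            nlinarith [hβnn k, norm_nonneg (u (k + 1) - u k)]
    have h9 : s * ‖f' (y k)‖ ≤ ‖u (k + 2) - u (k + 1)‖ + ‖u (k + 1) - u k‖ := h7 ▸ h8
    have h6 : ‖f' (y k)‖ ≤ (1 / s) * (‖u (k + 2) - u (k + 1)‖ + ‖u (k + 1) - u k‖) := by
      rw [one_div, ← div_eq_inv_mul, le_div_iff₀ hs0]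
      linarith
    linarith
  have hv' : Tendsto (fun k => ‖u (k + 2) - u (k + 1)‖) atTop (nhds 0) := by
    have h1 := hv.comp (tendsto_add_atTop_nat 1)
    simpa [Function.comp_def] using h1
  have hglim : Tendsto (fun k => L * ‖u (k + 1) - u k‖
      + (1 / s) * (‖u (k + 2) - u (k + 1)‖ + ‖u (k + 1) - u k‖)) atTop (nhds 0) := by
    have h1 := (hv.const_mul L).add ((hv'.add hv).const_mul (1 / s))
    simpa using h1
  have hgrad : Tendsto (fun k => ‖f' (u (k + 1))‖) atTop (nhds 0) :=
    squeeze_zero (fun k => norm_nonneg _) hgb hglim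
  exact ⟨S1, S2, hv, hfconv, hgrad⟩
end

section
/- Let E : [t₀,∞) → [0,∞) be continuous with E(t) → 0 as t → ∞ and E(t₀) > 0. If there exists α > 1 such that t^α √(E(t)) → 0 as t → ∞, and if E satisfies E(t) ≥ E(t₀) exp(-2∫_{t₀}^{t} √(E(s)) ds) for all t ≥ t₀, then a contradiction follows; hence no such α exists. -/
open Set Filter intervalIntegral

theorem stmt_18 (t₀ : ℝ) (ht₀ : 0 < t₀) (E : ℝ → ℝ)
    (hcont : ContinuousOn E (Ici t₀))
    (hnonneg : ∀ t ∈ Ici t₀, 0 ≤ E t)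
    (hE0 : 0 < E t₀)
    (hlim : Tendsto E atTop (nhds 0))
    (hgronwall : ∀ t ≥ t₀,
      E t ≥ E t₀ * Real.exp (-2 * ∫ s in t₀..t, Real.sqrt (E s))) :
    ¬ ∃ α > (1 : ℝ), Tendsto (fun t => t ^ α * Real.sqrt (E t)) atTop (nhds 0) := by
  rintro ⟨α, hα, htend⟩
  have hsq : ContinuousOn (fun s => Real.sqrt (E s)) (Ici t₀) :=
    Real.continuous_sqrt.comp_continuousOn hcont
  have hint : ∀ a b : ℝ, t₀ ≤ a → t₀ ≤ b →
      IntervalIntegrable (fun s => Real.sqrt (E s)) MeasureTheory.volume a b := by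
    intro a b ha hb
    exact (hsq.mono (fun x hx => le_trans (le_min ha hb) hx.1)).intervalIntegrable
  -- eventually √(E t) ≤ t ^ (-α)
  have hev : ∀ᶠ t in atTop, Real.sqrt (E t) ≤ t ^ (-α) := by
    filter_upwards [htend.eventually_lt_const one_pos, eventually_gt_atTop (0:ℝ)]
      with x hx hx0
    have h1 : x ^ (-α) * x ^ α = 1 := by
      rw [← Real.rpow_add hx0]; simp
    calc Real.sqrt (E x) = x ^ (-α) * (x ^ α * Real.sqrt (E x)) := by
          rw [← mul_assoc, h1, one_mul]
      _ ≤ x ^ (-α) * 1 :=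
          mul_le_mul_of_nonneg_left hx.le (Real.rpow_nonneg hx0.le _)
      _ = x ^ (-α) := mul_one _
  obtain ⟨T₁, hT₁⟩ := eventually_atTop.mp hev
  set T := max T₁ (max t₀ 1) with hTdef
  have hTt₀ : t₀ ≤ T := le_max_of_le_right (le_max_left _ _)
  have hT1 : (1:ℝ) ≤ T := le_max_of_le_right (le_max_right _ _)
  have hTpos : (0:ℝ) < T := lt_of_lt_of_le one_pos hT1
  set C := ∫ s in t₀..T, Real.sqrt (E s) with hC
  set M := C + T ^ (-α + 1) / (α - 1) with hM
  have hαne : α - 1 ≠ 0 := sub_ne_zero.mpr (ne_of_gt hα)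
  -- key bound on the integral
  have hbound : ∀ t ≥ T, (∫ s in t₀..t, Real.sqrt (E s)) ≤ M := by
    intro t ht
    have htt₀ : t₀ ≤ t := le_trans hTt₀ ht
    have hsplit : (∫ s in t₀..t, Real.sqrt (E s))
        = C + ∫ s in T..t, Real.sqrt (E s) := by
      rw [hC, integral_add_adjacent_intervals (hint _ _ le_rfl hTt₀)
        (hint _ _ hTt₀ (le_trans hTt₀ ht))]
    rw [hsplit, hM]
    have hrpow_int : IntervalIntegrable (fun s : ℝ => s ^ (-α)) MeasureTheory.volume T t := by
      apply ContinuousOn.intervalIntegrable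
      apply ContinuousOn.rpow_const continuousOn_id
      intro x hx
      have : (0:ℝ) < x := lt_of_lt_of_le (lt_min hTpos (lt_of_lt_of_le hTpos ht)) hx.1
      exact Or.inl (ne_of_gt this)
    have hmono : (∫ s in T..t, Real.sqrt (E s)) ≤ ∫ s in T..t, s ^ (-α) := by
      apply integral_mono_on ht (hint _ _ hTt₀ (le_trans hTt₀ ht)) hrpow_int
      intro x hx
      exact hT₁ x (le_trans (le_max_left _ _) hx.1)
    have hval : (∫ s in T..t, (s:ℝ) ^ (-α)) = (t ^ (-α + 1) - T ^ (-α + 1)) / (-α + 1) := by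
      apply integral_rpow
      right
      constructor
      · intro h; apply hαne; linarith [neg_eq_iff_eq_neg.mp h]
      · intro h
        have : (0:ℝ) < min T t := lt_min hTpos (lt_of_lt_of_le hTpos ht)
        exact absurd h.1 (not_le.mpr this)
    have hfin : (t ^ (-α + 1) - T ^ (-α + 1)) / (-α + 1) ≤ T ^ (-α + 1) / (α - 1) := by
      have heq : (t ^ (-α + 1) - T ^ (-α + 1)) / (-α + 1)
          = (T ^ (-α + 1) - t ^ (-α + 1)) / (α - 1) := by
        rw [div_eq_div_iff (by intro h; apply hαne; linarith) hαne]; ring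
      rw [heq]
      gcongr
      · linarith [Real.rpow_nonneg (le_of_lt (lt_of_lt_of_le hTpos ht)) (-α + 1)]
    linarith [hmono, hval, hfin]
  -- lower bound on E
  set c := E t₀ * Real.exp (-2 * M) with hc
  have hcpos : 0 < c := mul_pos hE0 (Real.exp_pos _)
  have hlower : ∀ t ≥ T, c ≤ E t := by
    intro t ht
    have h1 := hgronwall t (le_trans hTt₀ ht)
    have h2 : Real.exp (-2 * M) ≤ Real.exp (-2 * ∫ s in t₀..t, Real.sqrt (E s)) := by
      apply Real.exp_le_exp.mpr
      have := hbound t ht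
      linarith
    calc c ≤ E t₀ * Real.exp (-2 * ∫ s in t₀..t, Real.sqrt (E s)) :=
          mul_le_mul_of_nonneg_left h2 hE0.le
      _ ≤ E t := h1
  have := (hlim.eventually_lt_const hcpos).and (eventually_ge_atTop T)
  obtain ⟨t, ht1, ht2⟩ := this.exists
  exact absurd (hlower t ht2) (not_le.mpr ht1)
end
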